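/- arXiv:1406.6956 — 7 statements merged into one kernel-verified Lean document; each statement's English description precedes it below -/
import Mathlib

section
/- For every α ∈ [1/2, 1) there exist a constant c > 0 and an integer N₀ such that for all integers S ≥ 2 and n ≥ N₀, the minimax risk for estimating F_α(P) over P ∈ M_S under the multinomial sampling model with n samples satisfies inf_{F̂} sup_{P ∈ M_S} E_P[(F̂(X) − F_α(P))²] ≥ c·S^{2−2α}/n. -/
open scoped BigOperators ENNReal

/-- The probability simplex on `S` outcomes. -/
def simplex (S : ℕ) : Set (Fin S → ℝ) :=
  {P | (∀ i, 0 ≤ P i) ∧ ∑ i, P i = 1}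

/-- Joint pmf of `n` i.i.d. samples from `P`. -/
noncomputable def multPMF (S n : ℕ) (P : Fin S → ℝ) (x : Fin n → Fin S) : ℝ :=
  ∏ j, P (x j)

/-- Expected squared error of an estimator under the multinomial (i.i.d.) model. -/
noncomputable def multRisk (S n : ℕ) (P : Fin S → ℝ) (t : ℝ)
    (est : (Fin n → Fin S) → ℝ) : ℝ≥0∞ :=
  ∑' x : Fin n → Fin S, ENNReal.ofReal (multPMF S n P x * (est x - t) ^ 2)

/-- Minimax risk for estimating `F P` under the multinomial model with `n` samples. -/
noncomputable def multMinimax (S n : ℕ) (F : (Fin S → ℝ) → ℝ) : ℝ≥0∞ :=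
  ⨅ est : (Fin n → Fin S) → ℝ, ⨆ P ∈ simplex S, multRisk S n P (F P) est

/-- The power-sum functional `F_α(P) = ∑ i, (P i)^α` (real power; `0^α = 0` for `α > 0`). -/
noncomputable def Falpha (S : ℕ) (α : ℝ) (P : Fin S → ℝ) : ℝ :=
  ∑ i, P i ^ α

open Real Finset

lemma sqrt_lb_pos {u : ℝ} (h0 : 0 ≤ u) (h8 : u ≤ 8) :
    1 + u/2 - u^2/8 ≤ Real.sqrt (1+u) := by
  rcases le_or_gt (1 + u/2 - u^2/8) 0 with h | h
  · exact h.trans (Real.sqrt_nonneg _)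
  · have h1 : (0:ℝ) ≤ 1 + u := by linarith
    have h2 := Real.sq_sqrt h1
    have h3 := Real.sqrt_nonneg (1+u)
    nlinarith [sq_nonneg (Real.sqrt (1+u) - (1 + u/2 - u^2/8)), sq_nonneg u, mul_nonneg (mul_nonneg h0 h0) h0]

lemma sqrt_lb_neg {v : ℝ} (h0 : 0 ≤ v) (h1 : v ≤ 1) :
    1 - v/2 - v^2/2 ≤ Real.sqrt (1-v) := by
  rcases le_or_gt (1 - v/2 - v^2/2) 0 with h | h
  · exact h.trans (Real.sqrt_nonneg _)
  · have h1' : (0:ℝ) ≤ 1 - v := by linarith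
    have h2 := Real.sq_sqrt h1'
    have h3 := Real.sqrt_nonneg (1-v)
    nlinarith [sq_nonneg (Real.sqrt (1-v) - (1 - v/2 - v^2/2)), sq_nonneg v, mul_nonneg (mul_nonneg h0 h0) h0]

lemma sum_ite_const {S : ℕ} (i0 : Fin S) (a c : ℝ) :
    ∑ i : Fin S, (if i = i0 then a else c) = a + ((S:ℝ) - 1) * c := by
  have h : ∀ i : Fin S, (if i = i0 then a else c) = c + (if i = i0 then a - c else 0) :=
    fun i => by split <;> ring
  simp only [h, Finset.sum_add_distrib, Finset.sum_const,
    Finset.sum_ite_eq' Finset.univ i0 (fun _ => a - c), Finset.mem_univ, if_true,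
    Finset.card_univ, Fintype.card_fin, nsmul_eq_mul]
  ring

lemma sqrt_prod {ι : Type*} (s : Finset ι) (f : ι → ℝ) (hf : ∀ i ∈ s, 0 ≤ f i) :
    Real.sqrt (∏ i ∈ s, f i) = ∏ i ∈ s, Real.sqrt (f i) := by
  induction s using Finset.cons_induction with
  | empty => simp
  | cons a s ha ih =>
      rw [Finset.prod_cons, Finset.prod_cons,
        Real.sqrt_mul (hf a (Finset.mem_cons_self a s)),
        ih (fun i hi => hf i (Finset.mem_cons_of_mem hi))]

lemma sum_prod_fn {S n : ℕ} (g : Fin S → ℝ) :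
    ∑ x : Fin n → Fin S, ∏ j, g (x j) = (∑ i, g i) ^ n := by
  rw [← Fintype.piFinset_univ, Finset.sum_prod_piFinset Finset.univ (fun _ i => g i)]
  simp

lemma bern_up {δ α : ℝ} (hδ0 : 0 ≤ δ) (hα0 : 0 ≤ α) (hα2 : α ≤ 1) :
    ((3:ℝ)/4 + δ) ^ α ≤ (3/4:ℝ)^α + α * ((3/4:ℝ)^α * ((4/3) * δ)) := by
  have h34 : ((3:ℝ)/4 + δ) = (3/4) * (1 + (4/3)*δ) := by ring
  rw [h34, Real.mul_rpow (by norm_num) (by linarith)]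
  have hb := rpow_one_add_le_one_add_mul_self (s := (4/3)*δ) (by linarith) hα0 hα2
  have h0 : (0:ℝ) ≤ (3/4:ℝ)^α := Real.rpow_nonneg (by norm_num) _
  nlinarith [mul_le_mul_of_nonneg_left hb h0]

lemma bern_dn {δ α : ℝ} (hδ : δ ≤ 1/4) (hα0 : 0 ≤ α) (hα2 : α ≤ 1) :
    ((1:ℝ)/4 - δ) ^ α ≤ (1/4:ℝ)^α + α * ((1/4:ℝ)^α * (-(4 * δ))) := by
  have h14 : ((1:ℝ)/4 - δ) = (1/4) * (1 + (-(4*δ))) := by ring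
  rw [h14, Real.mul_rpow (by norm_num) (by linarith)]
  have hb := rpow_one_add_le_one_add_mul_self (s := -(4*δ)) (by linarith) hα0 hα2
  have h0 : (0:ℝ) ≤ (1/4:ℝ)^α := Real.rpow_nonneg (by norm_num) _
  nlinarith [mul_le_mul_of_nonneg_left hb h0]

lemma deltaF_bound {α δ m : ℝ} (hα1 : 1/2 ≤ α) (hα2 : α < 1) (hδ0 : 0 ≤ δ)
    (hδ : δ ≤ 1/4) (hm : 1 ≤ m) :
    ((3/4+δ)^α + m^(1-α)*(1/4-δ)^α) - ((3/4:ℝ)^α + m^(1-α)*(1/4:ℝ)^α)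
      ≤ -(α * (1 - (1/3:ℝ)^(1-α)) * (4*m)^(1-α) * δ) := by
  have hα0 : (0:ℝ) ≤ α := by linarith
  have hm0 : (0:ℝ) < m := by linarith
  have hA := bern_up hδ0 hα0 hα2.le
  have hB := bern_dn hδ hα0 hα2.le
  have e1 : (3/4:ℝ)^α * (4/3) = (4/3:ℝ)^(1-α) := by
    rw [Real.rpow_sub (by norm_num), Real.rpow_one]
    rw [show (3/4:ℝ) = ((4/3:ℝ))⁻¹ by norm_num, Real.inv_rpow (by norm_num)]
    field_simp
  have e2 : (4:ℝ) * (1/4:ℝ)^α = (4:ℝ)^(1-α) := by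
    rw [Real.rpow_sub (by norm_num), Real.rpow_one]
    rw [show (1/4:ℝ) = ((4:ℝ))⁻¹ by norm_num, Real.inv_rpow (by norm_num)]
    field_simp
  have e3 : (4*m:ℝ)^(1-α) = 4^(1-α) * m^(1-α) := Real.mul_rpow (by norm_num) hm0.le
  have hC : (4/3:ℝ)^(1-α) ≤ (1/3:ℝ)^(1-α) * (4*m)^(1-α) := by
    rw [← Real.mul_rpow (by norm_num) (by linarith)]
    exact Real.rpow_le_rpow (by norm_num) (by nlinarith) (by linarith)
  have hm1 : (0:ℝ) ≤ m^(1-α) := Real.rpow_nonneg hm0.le _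
  have key : m ^ (1-α) * ((1/4:ℝ)^α + α * ((1/4:ℝ)^α * -(4 * δ)))
      = m ^ (1-α) * (1/4:ℝ)^α - α*δ*((4*m)^(1-α)) := by
    rw [e3, ← e2]; ring
  have hB' : m ^ (1-α) * (1/4-δ:ℝ)^α ≤ m ^ (1-α) * (1/4:ℝ)^α - α*δ*((4*m)^(1-α)) :=
    (mul_le_mul_of_nonneg_left hB hm1).trans_eq key
  have eA : α * ((3/4:ℝ)^α * ((4/3) * δ)) = α*δ*((4/3:ℝ)^(1-α)) := by rw [← e1]; ring
  have hMul := mul_le_mul_of_nonneg_left hC (mul_nonneg hα0 hδ0)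
  have eGoal : -(α * (1 - (1/3:ℝ)^(1-α)) * (4*m)^(1-α) * δ)
      = α*δ*((1/3:ℝ)^(1-α) * (4*m)^(1-α)) - α*δ*((4*m)^(1-α)) := by ring
  linarith [hA, hB', eA, hMul, eGoal]

lemma rho_lb {δ : ℝ} (hδ0 : 0 ≤ δ) (hδ : δ ≤ 1/4) :
    1 - 3*δ^2 ≤ Real.sqrt (3/4*(3/4+δ)) + Real.sqrt (1/4*(1/4-δ)) := by
  have h1 : Real.sqrt (3/4*(3/4+δ)) = (3/4) * Real.sqrt (1 + (4/3)*δ) := by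
    rw [show (3/4*(3/4+δ):ℝ) = (3/4)^2 * (1+(4/3)*δ) by ring,
      Real.sqrt_mul (by positivity), Real.sqrt_sq (by norm_num)]
  have h2 : Real.sqrt (1/4*(1/4-δ)) = (1/4) * Real.sqrt (1 - 4*δ) := by
    rw [show (1/4*(1/4-δ):ℝ) = (1/4)^2 * (1-4*δ) by ring,
      Real.sqrt_mul (by positivity), Real.sqrt_sq (by norm_num)]
  have b1 := sqrt_lb_pos (u := (4/3)*δ) (by linarith) (by linarith)
  have b2 := sqrt_lb_neg (v := 4*δ) (by linarith) (by linarith)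
  rw [h1, h2]
  nlinarith [b1, b2, sq_nonneg δ]
lemma lecam (S n : ℕ) (P Q : Fin S → ℝ) (hP0 : ∀ i, 0 ≤ P i) (hQ0 : ∀ i, 0 ≤ Q i)
    (hP1 : ∑ i, P i = 1) (hQ1 : ∑ i, Q i = 1) (ρ : ℝ)
    (hρ : ∑ i, Real.sqrt (P i * Q i) = ρ) (hρ0 : 0 ≤ ρ)
    (tP tQ : ℝ) (est : (Fin n → Fin S) → ℝ) :
    ENNReal.ofReal (ρ^(n*2)/2 * ((tP - tQ)^2/2))
      ≤ multRisk S n P tP est + multRisk S n Q tQ est := by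
  set pm : (Fin n → Fin S) → ℝ := multPMF S n P with hpmd
  set qm : (Fin n → Fin S) → ℝ := multPMF S n Q with hqmd
  have hpm0 : ∀ x, 0 ≤ pm x := fun x => Finset.prod_nonneg (fun j _ => hP0 _)
  have hqm0 : ∀ x, 0 ≤ qm x := fun x => Finset.prod_nonneg (fun j _ => hQ0 _)
  have hpmsum : ∑ x, pm x = 1 := by
    rw [hpmd]; show (∑ x : Fin n → Fin S, ∏ j, P (x j)) = 1; rw [sum_prod_fn, hP1, one_pow]
  have hqmsum : ∑ x, qm x = 1 := by
    rw [hqmd]; show (∑ x : Fin n → Fin S, ∏ j, Q (x j)) = 1; rw [sum_prod_fn, hQ1, one_pow]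
  have hmin0 : ∀ x, 0 ≤ min (pm x) (qm x) := fun x => le_min (hpm0 x) (hqm0 x)
  have hkey1 : ∑ x, Real.sqrt (pm x * qm x) = ρ^n := by
    have hx : ∀ x : Fin n → Fin S, Real.sqrt (pm x * qm x)
        = ∏ j, Real.sqrt (P (x j) * Q (x j)) := by
      intro x
      rw [show pm x * qm x = ∏ j, (P (x j) * Q (x j)) from (Finset.prod_mul_distrib).symm,
        sqrt_prod _ _ (fun j _ => mul_nonneg (hP0 _) (hQ0 _))]
    rw [Finset.sum_congr rfl (fun x _ => hx x),
      sum_prod_fn (fun i => Real.sqrt (P i * Q i)), hρ]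
  have hminnn : (0:ℝ) ≤ ∑ x, min (pm x) (qm x) := Finset.sum_nonneg (fun x _ => hmin0 x)
  have hminsum : ρ^(n*2)/2 ≤ ∑ x, min (pm x) (qm x) := by
    have hmm : ∀ x : Fin n → Fin S, Real.sqrt (min (pm x) (qm x)) * Real.sqrt (max (pm x) (qm x))
        = Real.sqrt (pm x * qm x) := fun x => by
      rw [← Real.sqrt_mul (hmin0 x), min_mul_max]
    have hCS := Real.sum_sqrt_mul_sqrt_le (Finset.univ)
      (f := fun x => min (pm x) (qm x)) (g := fun x => max (pm x) (qm x))
      (fun x => hmin0 x) (fun x => le_max_of_le_left (hpm0 x))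
    have hmaxsum : ∑ x, max (pm x) (qm x) ≤ 2 := by
      calc ∑ x, max (pm x) (qm x) ≤ ∑ x, (pm x + qm x) :=
            Finset.sum_le_sum (fun x _ => max_le_add_of_nonneg (hpm0 x) (hqm0 x))
        _ = 2 := by rw [Finset.sum_add_distrib, hpmsum, hqmsum]; norm_num
    have h1 : ρ^n ≤ Real.sqrt (∑ x, min (pm x) (qm x)) * Real.sqrt 2 := by
      rw [← hkey1, Finset.sum_congr rfl (fun x _ => (hmm x).symm)]
      exact hCS.trans (mul_le_mul_of_nonneg_left (Real.sqrt_le_sqrt hmaxsum)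
        (Real.sqrt_nonneg _))
    have h2 : (ρ^n)^2 ≤ (∑ x, min (pm x) (qm x)) * 2 := by
      nlinarith [Real.sq_sqrt hminnn, Real.sq_sqrt (show (0:ℝ) ≤ 2 by norm_num),
        Real.sqrt_nonneg (∑ x, min (pm x) (qm x)), Real.sqrt_nonneg (2:ℝ),
        pow_nonneg hρ0 n]
    rw [pow_mul]; linarith
  -- pointwise bound
  set C : ℝ := (tP - tQ)^2/2 with hCd
  have hC0 : 0 ≤ C := by positivity
  have hpt : ∀ x : Fin n → Fin S,
      ENNReal.ofReal (min (pm x) (qm x) * C)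
        ≤ ENNReal.ofReal (pm x * (est x - tP)^2) + ENNReal.ofReal (qm x * (est x - tQ)^2) := by
    intro x
    refine le_trans (ENNReal.ofReal_le_ofReal ?_) ENNReal.ofReal_add_le
    have hq1 : (tP - tQ)^2/2 ≤ (est x - tP)^2 + (est x - tQ)^2 := by
      nlinarith [sq_nonneg (2*est x - tP - tQ)]
    have h2 := mul_le_mul_of_nonneg_left hq1 (hmin0 x)
    have h3 : min (pm x) (qm x) * (est x - tP)^2 ≤ pm x * (est x - tP)^2 :=
      mul_le_mul_of_nonneg_right (min_le_left _ _) (sq_nonneg _)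
    have h4 : min (pm x) (qm x) * (est x - tQ)^2 ≤ qm x * (est x - tQ)^2 :=
      mul_le_mul_of_nonneg_right (min_le_right _ _) (sq_nonneg _)
    rw [hCd]; nlinarith
  rw [multRisk, multRisk, tsum_fintype, tsum_fintype]
  calc ENNReal.ofReal (ρ^(n*2)/2 * C)
      ≤ ENNReal.ofReal ((∑ x, min (pm x) (qm x)) * C) :=
        ENNReal.ofReal_le_ofReal (mul_le_mul_of_nonneg_right hminsum hC0)
    _ = ENNReal.ofReal (∑ x, min (pm x) (qm x) * C) := by rw [Finset.sum_mul]
    _ = ∑ x, ENNReal.ofReal (min (pm x) (qm x) * C) :=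
        ENNReal.ofReal_sum_of_nonneg (fun x _ => mul_nonneg (hmin0 x) hC0)
    _ ≤ ∑ x, (ENNReal.ofReal (pm x * (est x - tP)^2) + ENNReal.ofReal (qm x * (est x - tQ)^2)) :=
        Finset.sum_le_sum (fun x _ => hpt x)
    _ = (∑ x, ENNReal.ofReal (pm x * (est x - tP)^2))
          + ∑ x, ENNReal.ofReal (qm x * (est x - tQ)^2) := Finset.sum_add_distrib

lemma tail_rpow {α m c : ℝ} (hm0 : 0 < m) (hc : 0 ≤ c) :
    m * (c/m)^α = m^(1-α) * c^α := by
  rw [Real.div_rpow hc hm0.le, Real.rpow_sub hm0, Real.rpow_one]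
  have h := (Real.rpow_pos_of_pos hm0 α).ne'
  field_simp

set_option maxHeartbeats 1000000 in
theorem Falpha_minimax_variance_lower_bound (α : ℝ) (hα1 : 1 / 2 ≤ α) (hα2 : α < 1) :
    ∃ c : ℝ, 0 < c ∧ ∃ N₀ : ℕ,
      ∀ S n : ℕ, 2 ≤ S → N₀ ≤ n →
        ENNReal.ofReal (c * (S : ℝ) ^ (2 - 2 * α) / (n : ℝ))
          ≤ multMinimax S n (Falpha S α) := by
  have hα0 : (0:ℝ) < α := by linarith
  set κ : ℝ := α * (1 - (1/3:ℝ)^(1-α)) with hκdef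
  have h13 : (1/3:ℝ)^(1-α) < 1 := Real.rpow_lt_one (by norm_num) (by norm_num) (by linarith)
  have hκpos : 0 < κ := mul_pos hα0 (by linarith)
  clear_value κ
  refine ⟨κ^2/400, div_pos (pow_pos hκpos 2) (by norm_num), 1, ?_⟩
  intro S n hS hn
  have hn1 : (1:ℝ) ≤ (n:ℝ) := by exact_mod_cast hn
  have hn0 : (0:ℝ) < (n:ℝ) := by linarith
  have hsq0 : (0:ℝ) < Real.sqrt n := Real.sqrt_pos.2 hn0
  have hsq1 : (1:ℝ) ≤ Real.sqrt n := by
    rw [show (1:ℝ) = Real.sqrt 1 by simp]; exact Real.sqrt_le_sqrt hn1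
  set δ : ℝ := 1/(5*Real.sqrt n) with hδdef
  have hδ0 : 0 < δ := by positivity
  have hδ4 : δ ≤ 1/4 := by
    rw [hδdef, div_le_div_iff₀ (by positivity) (by norm_num)]; nlinarith
  have hδsq : δ^2 = 1/(25*(n:ℝ)) := by
    rw [hδdef, div_pow, one_pow, mul_pow, Real.sq_sqrt hn0.le]; norm_num
  clear_value δ
  set m : ℝ := (S:ℝ) - 1 with hmdef
  have hSr : (2:ℝ) ≤ (S:ℝ) := by exact_mod_cast hS
  have hm : (1:ℝ) ≤ m := by rw [hmdef]; linarith
  have hm0 : (0:ℝ) < m := by linarith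
  clear_value m
  have hS0 : (0:ℕ) < S := by omega
  set i0 : Fin S := ⟨0, hS0⟩ with hi0def
  set P : Fin S → ℝ := fun i => if i = i0 then 3/4 else 1/(4*m) with hPd
  set Q : Fin S → ℝ := fun i => if i = i0 then 3/4+δ else (1/4-δ)/m with hQd
  clear_value i0 P Q
  have hPmem : P ∈ simplex S := by
    constructor
    · intro i; by_cases h : i = i0 <;> simp only [hPd, h, if_true, if_false] <;> positivity
    · show (∑ i, P i) = 1
      simp only [hPd]; rw [sum_ite_const i0 (3/4) (1/(4*m)), ← hmdef]
      field_simp; ring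
  have hQmem : Q ∈ simplex S := by
    constructor
    · intro i; by_cases h : i = i0 <;> simp only [hQd, h, if_true, if_false]
      · positivity
      · have : (0:ℝ) ≤ 1/4 - δ := by linarith
        positivity
    · show (∑ i, Q i) = 1
      simp only [hQd]; rw [sum_ite_const i0 (3/4+δ) ((1/4-δ)/m), ← hmdef]
      field_simp; ring
  -- Falpha values
  have hFP : Falpha S α P = (3/4:ℝ)^α + m^(1-α) * (1/4:ℝ)^α := by
    have hpt : ∀ i : Fin S, P i ^ α
        = (if i = i0 then ((3:ℝ)/4)^α else ((1/(4*m):ℝ))^α) := fun i => by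
      by_cases h : i = i0 <;> simp [hPd, h]
    rw [Falpha, Finset.sum_congr rfl (fun i _ => hpt i), sum_ite_const, ← hmdef,
      show (1/(4*m):ℝ) = (1/4)/m from (div_div 1 4 m).symm, tail_rpow hm0 (by norm_num)]
  have hFQ : Falpha S α Q = ((3:ℝ)/4+δ)^α + m^(1-α) * ((1:ℝ)/4-δ)^α := by
    have hpt : ∀ i : Fin S, Q i ^ α
        = (if i = i0 then ((3:ℝ)/4+δ)^α else (((1/4-δ)/m:ℝ))^α) := fun i => by
      by_cases h : i = i0 <;> simp [hQd, h]
    rw [Falpha, Finset.sum_congr rfl (fun i _ => hpt i), sum_ite_const, ← hmdef,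
      tail_rpow hm0 (by linarith)]
  -- separation
  have hSpow0 : (0:ℝ) ≤ (S:ℝ)^(2-2*α) := Real.rpow_nonneg (Nat.cast_nonneg S) _
  have hsep : κ * (S:ℝ)^(1-α) * δ ≤ Falpha S α P - Falpha S α Q := by
    have hd := deltaF_bound hα1 hα2 hδ0.le hδ4 hm
    rw [← hκdef] at hd
    have h4m : (S:ℝ)^(1-α) ≤ (4*m)^(1-α) :=
      Real.rpow_le_rpow (by positivity) (by rw [hmdef]; linarith) (by linarith)
    rw [hFP, hFQ]
    nlinarith [mul_le_mul_of_nonneg_left h4m (mul_nonneg hκpos.le hδ0.le), hd]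
  have hsep0 : (0:ℝ) ≤ κ * (S:ℝ)^(1-α) * δ := by positivity
  have hΔsq : κ^2 * (S:ℝ)^(2-2*α) * δ^2 ≤ (Falpha S α P - Falpha S α Q)^2 := by
    have h2 : (S:ℝ)^(2-2*α) = ((S:ℝ)^(1-α))^2 := by
      rw [← Real.rpow_natCast ((S:ℝ)^(1-α)) 2, ← Real.rpow_mul (Nat.cast_nonneg S)]
      norm_num; ring_nf
    have := mul_self_le_mul_self hsep0 hsep
    rw [h2]; nlinarith
  -- Bhattacharyya coefficient
  set ρ : ℝ := Real.sqrt (3/4*(3/4+δ)) + Real.sqrt (1/4*(1/4-δ)) with hρd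
  clear_value ρ
  have hρ0 : (0:ℝ) ≤ ρ := by
    rw [hρd]; exact add_nonneg (Real.sqrt_nonneg _) (Real.sqrt_nonneg _)
  have hρeq : ∑ i, Real.sqrt (P i * Q i) = ρ := by
    have hpt : ∀ i : Fin S, Real.sqrt (P i * Q i)
        = (if i = i0 then Real.sqrt (3/4*(3/4+δ))
            else Real.sqrt ((1/(4*m)) * ((1/4-δ)/m))) := by
      intro i
      simp only [hPd, hQd]
      by_cases h : i = i0
      · rw [if_pos h, if_pos h, if_pos h]
      · rw [if_neg h, if_neg h, if_neg h]
    rw [Finset.sum_congr rfl (fun i _ => hpt i), sum_ite_const, ← hmdef, hρd]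
    have e : (1/(4*m)) * ((1/4-δ)/m) = (1/4*(1/4-δ)) * (1/m)^2 := by
      ring
    have h14 : (0:ℝ) ≤ 1/4*(1/4-δ) := by nlinarith
    rw [e, Real.sqrt_mul h14, Real.sqrt_sq (by positivity : (0:ℝ) ≤ 1/m),
      show m * (Real.sqrt (1/4*(1/4-δ)) * (1/m)) = Real.sqrt (1/4*(1/4-δ)) * (m * m⁻¹)
        from by rw [one_div]; ring,
      mul_inv_cancel₀ hm0.ne', mul_one]
  have hρlb : 1 - 1/(8*(n:ℝ)) ≤ ρ := by
    have hr := rho_lb hδ0.le hδ4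
    have h3 : 3*δ^2 ≤ 1/(8*(n:ℝ)) := by
      rw [hδsq, show (3:ℝ)*(1/(25*(n:ℝ))) = 3/(25*n) from by ring,
        div_le_div_iff₀ (by positivity) (by positivity)]
      linarith
    rw [hρd]; linarith
  have h18 : 1/(8*(n:ℝ)) ≤ 1/8 := by
    rw [div_le_div_iff₀ (by positivity) (by norm_num)]; linarith
  have h34 : (3:ℝ)/4 ≤ ρ^(n*2) := by
    have hb := one_add_mul_le_pow (a := -(1/(8*(n:ℝ)))) (by linarith) (n*2)
    have hval : 1 + ((n*2:ℕ):ℝ) * (-(1/(8*(n:ℝ)))) = 3/4 := by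
      push_cast; field_simp; ring
    have h0 : (0:ℝ) ≤ 1 + -(1/(8*(n:ℝ))) := by linarith
    have hmono := pow_le_pow_left₀ h0 (by linarith : 1 + -(1/(8*(n:ℝ))) ≤ ρ) (n*2)
    calc (3:ℝ)/4 = 1 + ((n*2:ℕ):ℝ) * (-(1/(8*(n:ℝ)))) := hval.symm
      _ ≤ (1 + -(1/(8*(n:ℝ))))^(n*2) := hb
      _ ≤ ρ^(n*2) := hmono
  -- final assembly
  rw [multMinimax]
  refine le_iInf fun est => ?_
  have hP' : multRisk S n P (Falpha S α P) est
      ≤ ⨆ R ∈ simplex S, multRisk S n R (Falpha S α R) est :=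
    le_biSup (fun R => multRisk S n R (Falpha S α R) est) hPmem
  have hQ' : multRisk S n Q (Falpha S α Q) est
      ≤ ⨆ R ∈ simplex S, multRisk S n R (Falpha S α R) est :=
    le_biSup (fun R => multRisk S n R (Falpha S α R) est) hQmem
  have hlec := lecam S n P Q hPmem.1 hQmem.1 hPmem.2 hQmem.2 ρ hρeq hρ0
    (Falpha S α P) (Falpha S α Q) est
  have hreal : 2 * (κ^2/400 * (S:ℝ)^(2-2*α) / n)
      ≤ ρ^(n*2)/2 * ((Falpha S α P - Falpha S α Q)^2/2) := by
    have hΔ0 : (0:ℝ) ≤ (Falpha S α P - Falpha S α Q)^2 := sq_nonneg _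
    have step1 : (3/4:ℝ)/2 * ((Falpha S α P - Falpha S α Q)^2/2)
        ≤ ρ^(n*2)/2 * ((Falpha S α P - Falpha S α Q)^2/2) :=
      mul_le_mul_of_nonneg_right (by linarith) (by positivity)
    have hδval : κ^2 * (S:ℝ)^(2-2*α) * δ^2 = κ^2 * (S:ℝ)^(2-2*α) / (25*n) := by
      rw [hδsq]; ring
    have hnn : (0:ℝ) ≤ κ^2 * (S:ℝ)^(2-2*α) / (n:ℝ) := by positivity
    have e0 : κ^2 * (S:ℝ)^(2-2*α) / (25*n) ≤ (Falpha S α P - Falpha S α Q)^2 :=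
      hδval ▸ hΔsq
    have e1 : (3:ℝ)/16 * (κ^2 * (S:ℝ)^(2-2*α) / (25*n))
        ≤ 3/16 * (Falpha S α P - Falpha S α Q)^2 :=
      mul_le_mul_of_nonneg_left e0 (by norm_num)
    calc 2 * (κ^2/400 * (S:ℝ)^(2-2*α) / n)
        = (1/200) * (κ^2 * (S:ℝ)^(2-2*α) / n) := by ring
      _ ≤ (3/400) * (κ^2 * (S:ℝ)^(2-2*α) / n) := by linarith
      _ = 3/16 * (κ^2 * (S:ℝ)^(2-2*α) / (25*n)) := by ring
      _ ≤ 3/16 * (Falpha S α P - Falpha S α Q)^2 := e1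
      _ = 3/4/2 * ((Falpha S α P - Falpha S α Q)^2/2) := by ring
      _ ≤ ρ^(n*2)/2 * ((Falpha S α P - Falpha S α Q)^2/2) := step1
  have chain : ENNReal.ofReal (2 * (κ^2/400 * (S:ℝ)^(2-2*α) / n))
      ≤ 2 * ⨆ R ∈ simplex S, multRisk S n R (Falpha S α R) est := by
    calc ENNReal.ofReal (2 * (κ^2/400 * (S:ℝ)^(2-2*α) / n))
        ≤ ENNReal.ofReal (ρ^(n*2)/2 * ((Falpha S α P - Falpha S α Q)^2/2)) :=
          ENNReal.ofReal_le_ofReal hreal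
      _ ≤ multRisk S n P (Falpha S α P) est + multRisk S n Q (Falpha S α Q) est := hlec
      _ ≤ (⨆ R ∈ simplex S, multRisk S n R (Falpha S α R) est)
            + ⨆ R ∈ simplex S, multRisk S n R (Falpha S α R) est := add_le_add hP' hQ'
      _ = 2 * ⨆ R ∈ simplex S, multRisk S n R (Falpha S α R) est := (two_mul _).symm
  rw [ENNReal.ofReal_mul (by norm_num : (0:ℝ) ≤ 2)] at chain
  have h2e : ENNReal.ofReal (2:ℝ) = (2:ℝ≥0∞) := by
    rw [show (2:ℝ) = ((2:ℕ):ℝ) by norm_num, ENNReal.ofReal_natCast]; norm_num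
  rw [h2e] at chain
  exact (ENNReal.mul_le_mul_iff_right (by norm_num) (by norm_num)).1 chain
end

section
/- Let S ≥ 1 be an integer and let P ∈ M_S. Define V(P) = ∑_{i=1}^S p_i·(ln p_i)² − ( ∑_{i=1}^S p_i·ln p_i )², with the conventions 0·(ln 0)² = 0 and 0·ln 0 = 0 (this is the variance of −ln P(X) for X ~ P). Then V(P) ≤ (ln S + 1)²; moreover, if S ≥ 56 then V(P) ≤ (3/4)·(ln S)². -/
open scoped BigOperators

/-- The variance of `-ln P(X)` for `X ~ P` (conventions `0·(ln 0)² = 0` and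
`0·ln 0 = 0` are automatic since `Real.log 0 = 0`). -/
noncomputable def varLog (S : ℕ) (P : Fin S → ℝ) : ℝ :=
  ∑ i, P i * (Real.log (P i)) ^ 2 - (∑ i, P i * Real.log (P i)) ^ 2

/-! Auxiliary lemmas -/

lemma phi_nonneg {x : ℝ} (hx : 0 < x) : 0 ≤ x * Real.log x - x + 1 := by
  have h := Real.one_sub_inv_le_log_of_pos hx
  have h2 : x * (1 - x⁻¹) ≤ x * Real.log x :=
    mul_le_mul_of_nonneg_left h hx.le
  have h3 : x * (1 - x⁻¹) = x - 1 := by field_simp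
  linarith [h3 ▸ h2]

lemma K1 {x : ℝ} (hx : 0 < x) (hx1 : x ≤ 1) :
    x * (Real.log x) ^ 2 ≤ 2 * (x * Real.log x - x + 1) := by
  set y : ℝ := -Real.log x with hy
  have hy0 : 0 ≤ y := by
    have := Real.log_nonpos hx.le hx1
    simp only [hy]; linarith
  have hq : 1 + y + y ^ 2 / 2 ≤ Real.exp y := Real.quadratic_le_exp_of_nonneg hy0
  have hxe : x * Real.exp y = 1 := by
    rw [hy, Real.exp_neg, Real.exp_log hx]
    field_simp
  have h2 : x * (y ^ 2 + 2 * y + 2) ≤ 2 := by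
    have : x * (y ^ 2 + 2 * y + 2) ≤ x * (2 * Real.exp y) := by
      apply mul_le_mul_of_nonneg_left _ hx.le
      nlinarith [hq]
    calc x * (y ^ 2 + 2 * y + 2) ≤ x * (2 * Real.exp y) := this
      _ = 2 * (x * Real.exp y) := by ring
      _ = 2 := by rw [hxe]; ring
  have hlx : Real.log x = -y := by simp [hy]
  rw [hlx]
  nlinarith [h2]

lemma log_three_lb : (1.0939 : ℝ) ≤ Real.log 3 := by
  have he : Real.exp 1 < 2.7182818286 := Real.exp_one_lt_d9
  have h1 : 1 - ((3:ℝ) / Real.exp 1)⁻¹ ≤ Real.log (3 / Real.exp 1) :=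
    Real.one_sub_inv_le_log_of_pos (by positivity)
  have h2 : Real.log ((3:ℝ) / Real.exp 1) = Real.log 3 - 1 := by
    rw [Real.log_div (by norm_num) (Real.exp_ne_zero 1), Real.log_exp]
  have h3 : ((3:ℝ) / Real.exp 1)⁻¹ = Real.exp 1 / 3 := inv_div 3 (Real.exp 1)
  rw [h2, h3] at h1
  linarith

lemma log_three_ub : Real.log 3 ≤ 4/3 := by
  rw [Real.log_le_iff_le_exp (by norm_num)]
  have := Real.quadratic_le_exp_of_nonneg (show (0:ℝ) ≤ 4/3 by norm_num)
  nlinarith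

lemma log_nine_lb : (2.1878 : ℝ) ≤ Real.log 9 := by
  rw [show (9:ℝ) = 3^2 by norm_num, Real.log_pow]
  have := log_three_lb
  push_cast
  linarith

lemma log_nine_ub : Real.log 9 ≤ 8/3 := by
  rw [show (9:ℝ) = 3^2 by norm_num, Real.log_pow]
  have := log_three_ub
  push_cast
  linarith

lemma K3 {x : ℝ} (hx1 : 1 ≤ x) (hx9 : x ≤ 9) :
    x * (Real.log x) ^ 2 ≤ 4 * (x * Real.log x - x + 1) := by
  have hx : 0 < x := by linarith
  have key : x * (Real.log x - 2) ^ 2 ≤ 4 := by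
    rcases le_or_gt (Real.log x) 2 with h | h
    · set t : ℝ := Real.log x / 2 with ht
      have h1 : 1 - t ≤ Real.exp (-t) := by
        have := Real.add_one_le_exp (-t); linarith
      have h2 : (1 - t) * Real.exp t ≤ 1 := by
        calc (1 - t) * Real.exp t ≤ Real.exp (-t) * Real.exp t :=
              mul_le_mul_of_nonneg_right h1 (Real.exp_pos t).le
          _ = 1 := by rw [← Real.exp_add]; simp
      have hnn : 0 ≤ (1 - t) * Real.exp t := by
        apply mul_nonneg _ (Real.exp_pos t).le
        simp only [ht]; linarith
      have h3 : ((1 - t) * Real.exp t) ^ 2 ≤ 1 := by nlinarith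
      have h4 : Real.exp t ^ 2 = x := by
        rw [sq, ← Real.exp_add, show t + t = Real.log x by rw [ht]; ring,
          Real.exp_log hx]
      have h5 : (1 - t) ^ 2 * x ≤ 1 := by rw [← h4]; nlinarith [h3]
      have hlx : Real.log x = 2 * t := by rw [ht]; ring
      rw [hlx]
      nlinarith [h5]
    · have hl9 : Real.log x ≤ 8/3 := by
        have h3 : Real.log x ≤ Real.log 9 := Real.log_le_log hx hx9
        linarith [log_nine_ub]
      nlinarith [mul_le_mul_of_nonneg_right hx9 (sq_nonneg (Real.log x - 2)), h.le, hl9]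
  nlinarith [key]

lemma K2 {x : ℝ} (hx9 : 9 ≤ x) : 2.3662 * (x - 1) ≤ x * Real.log x := by
  have hx : 0 < x := by linarith
  have h1 : Real.log x = Real.log 9 + Real.log (x/9) := by
    rw [← Real.log_mul (by norm_num) (by positivity)]
    congr 1
    field_simp
  have h2 : 1 - (x/9)⁻¹ ≤ Real.log (x/9) := Real.one_sub_inv_le_log_of_pos (by positivity)
  have h4 : ((x:ℝ)/9)⁻¹ = 9 / x := inv_div x 9
  rw [h4] at h2
  have h6 : x * (1 - 9/x) ≤ x * Real.log (x/9) := mul_le_mul_of_nonneg_left h2 hx.le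
  have h7 : x * (1 - 9/x) = x - 9 := by field_simp
  have h8 : x * Real.log x = x * Real.log 9 + x * Real.log (x/9) := by rw [h1]; ring
  have h9 : (2.1878:ℝ) * x ≤ Real.log 9 * x :=
    mul_le_mul_of_nonneg_right log_nine_lb hx.le
  nlinarith [h6, h7, h8, h9]

lemma plog_le_one {p : ℝ} (h0 : 0 ≤ p) (h1 : p ≤ 1) : p * (Real.log p) ^ 2 ≤ 1 := by
  rcases eq_or_lt_of_le h0 with h | hp
  · simp [← h]
  · set u : ℝ := p ^ ((1:ℝ)/4) with hu
    have hu0 : 0 < u := Real.rpow_pos_of_pos hp _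
    have hu1 : u ≤ 1 := Real.rpow_le_one h0 h1 (by norm_num)
    have hlog : Real.log p = 4 * Real.log u := by
      rw [hu, Real.log_rpow hp]; ring
    have hp4 : u ^ (4:ℕ) = p := by
      rw [hu, ← Real.rpow_natCast (p ^ ((1:ℝ)/4)) 4, ← Real.rpow_mul h0]
      norm_num
    have hlu : 1 - u⁻¹ ≤ Real.log u := Real.one_sub_inv_le_log_of_pos hu0
    have hlu2 : -(u * Real.log u) ≤ 1 - u := by
      have := mul_le_mul_of_nonneg_left hlu hu0.le
      have he : u * (1 - u⁻¹) = u - 1 := by field_simp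
      nlinarith [this]
    have hlu0 : 0 ≤ -(u * Real.log u) := by
      have := Real.log_nonpos hu0.le hu1
      nlinarith
    have hsq : (u * Real.log u) ^ 2 ≤ (1 - u) ^ 2 := by nlinarith [hlu2, hlu0]
    have hv0 : 0 ≤ u * (1 - u) := mul_nonneg hu0.le (by linarith)
    have hv4 : u * (1 - u) ≤ 1/4 := by nlinarith [sq_nonneg (2*u - 1)]
    have h16 : 16 * (u * (1 - u)) ^ 2 ≤ 1 := by nlinarith [mul_self_le_mul_self hv0 hv4]
    calc p * (Real.log p) ^ 2 = 16 * (u ^ 2 * ((u * Real.log u) ^ 2)) := by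
          rw [hlog, ← hp4]; ring
      _ ≤ 16 * (u ^ 2 * (1 - u) ^ 2) := by
          apply mul_le_mul_of_nonneg_left _ (by norm_num)
          exact mul_le_mul_of_nonneg_left hsq (sq_nonneg u)
      _ = 16 * (u * (1 - u)) ^ 2 := by ring
      _ ≤ 1 := h16

lemma master {d L x : ℝ} (hx : 0 < x) (hlog : Real.log x ≤ L)
    (hdL : 4 ≤ d * L) (hd : d ≤ 2.3662 * (d - 1)) :
    x * (Real.log x) ^ 2 ≤ d * L * (x * Real.log x - x + 1) := by
  have hd1 : (1.73:ℝ) ≤ d := by nlinarith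
  have hL : 0 < L := by nlinarith
  have hphi : 0 ≤ x * Real.log x - x + 1 := phi_nonneg hx
  rcases le_or_gt x 1 with h1 | h1
  · nlinarith [K1 hx h1, hphi, hdL]
  rcases le_or_gt x 9 with h9 | h9
  · nlinarith [K3 h1.le h9, hphi, hdL]
  · have hk2 := K2 h9.le
    have hl0 : 0 ≤ Real.log x := Real.log_nonneg (by linarith)
    have hstep : x * Real.log x ≤ d * (x * Real.log x - x + 1) := by
      nlinarith [mul_le_mul_of_nonneg_left hk2 (show (0:ℝ) ≤ d - 1 by linarith),
        mul_le_mul_of_nonneg_right hd (show (0:ℝ) ≤ x - 1 by linarith)]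
    have hxl : 0 ≤ x * Real.log x := mul_nonneg hx.le hl0
    calc x * (Real.log x) ^ 2 = Real.log x * (x * Real.log x) := by ring
      _ ≤ L * (x * Real.log x) := mul_le_mul_of_nonneg_right hlog hxl
      _ ≤ L * (d * (x * Real.log x - x + 1)) := mul_le_mul_of_nonneg_left hstep hL.le
      _ = d * L * (x * Real.log x - x + 1) := by ring

lemma sum_tangent (S : ℕ) (hS : 0 < S) (P : Fin S → ℝ) (h0 : ∀ i, 0 ≤ P i)
    (h1 : ∑ i, P i = 1) {d : ℝ} (hdL : 4 ≤ d * Real.log S)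
    (hd : d ≤ 2.3662 * (d - 1)) :
    ∑ i, P i * (Real.log (P i) + (1 - d/2) * Real.log S) ^ 2
      ≤ (d/2) ^ 2 * (Real.log S) ^ 2 := by
  set L : ℝ := Real.log S with hLdef
  have hd1 : (1.73:ℝ) ≤ d := by nlinarith
  have hL : 0 < L := by nlinarith
  have hS0 : (0:ℝ) < S := by exact_mod_cast hS
  have hdLpos : 0 < d * L := by nlinarith
  have key : ∀ i, P i * (Real.log (P i) + (1 - d/2) * L) ^ 2 ≤
      ((d/2) ^ 2 * L ^ 2 - d * L) * P i + d * L / S := by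
    intro i
    have hpi := h0 i
    have hpi1 : P i ≤ 1 := by
      rw [← h1]
      exact Finset.single_le_sum (fun j _ => h0 j) (Finset.mem_univ i)
    rcases eq_or_lt_of_le hpi with h | hp
    · rw [← h]
      have hpos : 0 < d * L / S := div_pos hdLpos hS0
      simp only [zero_mul, mul_zero]
      linarith
    · set x : ℝ := (S:ℝ) * P i with hxdef
      have hx : 0 < x := by positivity
      have hlogx : Real.log x = L + Real.log (P i) := by
        rw [hxdef, Real.log_mul (ne_of_gt hS0) (ne_of_gt hp), hLdef]
      have hxS : x ≤ (S:ℝ) := by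
        rw [hxdef]
        nlinarith [hpi1, hS0]
      have hlogle : Real.log x ≤ L := by
        rw [hLdef]
        exact Real.log_le_log hx hxS
      have hm := master hx hlogle hdL hd
      rw [← mul_le_mul_iff_right₀ hS0]
      have e1 : (S:ℝ) * (P i * (Real.log (P i) + (1 - d/2) * L) ^ 2)
          = x * (Real.log x - (d/2) * L) ^ 2 := by
        rw [hlogx, hxdef]; ring
      have e2 : (S:ℝ) * (((d/2) ^ 2 * L ^ 2 - d * L) * P i + d * L / S)
          = ((d/2) ^ 2 * L ^ 2 - d * L) * x + d * L := by
        rw [hxdef]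
        field_simp
      rw [e1, e2]
      nlinarith [hm]
  calc ∑ i, P i * (Real.log (P i) + (1 - d/2) * L) ^ 2
      ≤ ∑ i, (((d/2) ^ 2 * L ^ 2 - d * L) * P i + d * L / S) :=
        Finset.sum_le_sum fun i _ => key i
    _ = ((d/2) ^ 2 * L ^ 2 - d * L) * (∑ i, P i) + (S:ℝ) * (d * L / S) := by
        rw [Finset.sum_add_distrib, ← Finset.mul_sum, Finset.sum_const, Finset.card_univ,
          Fintype.card_fin, nsmul_eq_mul]
    _ = (d/2) ^ 2 * L ^ 2 := by
        rw [h1]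
        field_simp
        ring
lemma varLog_le_sum (S : ℕ) (P : Fin S → ℝ) (h1 : ∑ i, P i = 1) (a : ℝ) :
    varLog S P ≤ ∑ i, P i * (Real.log (P i) + a) ^ 2 := by
  have expand : ∑ i, P i * (Real.log (P i) + a) ^ 2
      = ∑ i, P i * (Real.log (P i)) ^ 2 + 2 * a * (∑ i, P i * Real.log (P i)) + a ^ 2 := by
    have h : ∀ i ∈ Finset.univ, P i * (Real.log (P i) + a) ^ 2
        = P i * (Real.log (P i)) ^ 2 + 2 * a * (P i * Real.log (P i)) + a ^ 2 * P i :=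
      fun i _ => by ring
    rw [Finset.sum_congr rfl h, Finset.sum_add_distrib, Finset.sum_add_distrib,
      ← Finset.mul_sum, ← Finset.mul_sum, h1, mul_one]
  rw [varLog, expand]
  nlinarith [sq_nonneg ((∑ i, P i * Real.log (P i)) + a)]

theorem varLog_bound (S : ℕ) (hS : 1 ≤ S) (P : Fin S → ℝ) (hP : P ∈ simplex S) :
    varLog S P ≤ (Real.log S + 1) ^ 2 ∧
      (56 ≤ S → varLog S P ≤ 3 / 4 * (Real.log S) ^ 2) := by
  obtain ⟨h0, h1⟩ := hP
  have hSpos : 0 < S := hS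
  have hS1 : (1:ℝ) ≤ (S:ℝ) := by exact_mod_cast hS
  have hL0 : 0 ≤ Real.log S := Real.log_nonneg hS1
  have hlog2 : (0.6931471803:ℝ) < Real.log 2 := Real.log_two_gt_d9
  constructor
  · rcases le_or_gt 8 S with h8 | h8
    · -- large S : tangent line bound with d = 2
      have h8r : (8:ℝ) ≤ (S:ℝ) := by exact_mod_cast h8
      have hlog8 : Real.log 8 ≤ Real.log S := Real.log_le_log (by norm_num) h8r
      have h8v : (2.07:ℝ) ≤ Real.log 8 := by
        rw [show (8:ℝ) = 2 ^ 3 by norm_num, Real.log_pow]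
        push_cast
        linarith
      have hdL : 4 ≤ (2:ℝ) * Real.log S := by linarith
      have hd : (2:ℝ) ≤ 2.3662 * (2 - 1) := by norm_num
      have hmain := sum_tangent S hSpos P h0 h1 hdL hd
      have hv := varLog_le_sum S P h1 ((1 - 2/2) * Real.log S)
      nlinarith [hL0, hv, hmain]
    · -- small S : crude bound
      have hv := varLog_le_sum S P h1 0
      have hsum : ∑ i, P i * (Real.log (P i) + 0) ^ 2 ≤ (S:ℝ) := by
        calc ∑ i, P i * (Real.log (P i) + 0) ^ 2 ≤ ∑ _i : Fin S, (1:ℝ) := by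
              apply Finset.sum_le_sum
              intro i _
              have hpi1 : P i ≤ 1 := by
                rw [← h1]
                exact Finset.single_le_sum (fun j _ => h0 j) (Finset.mem_univ i)
              simpa using plog_le_one (h0 i) hpi1
          _ = (S:ℝ) := by simp
      have hlog3 := log_three_lb
      have hfin : (S:ℝ) ≤ (Real.log S + 1) ^ 2 := by
        interval_cases S
        · simp
        · push_cast; nlinarith [hlog2]
        · push_cast; nlinarith [hlog3]
        · have h4 : Real.log 4 = 2 * Real.log 2 := by
            rw [show (4:ℝ) = 2 ^ 2 by norm_num, Real.log_pow]; push_cast; ring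
          push_cast; nlinarith [hlog2, h4]
        · have h5 : Real.log 4 ≤ Real.log 5 := Real.log_le_log (by norm_num) (by norm_num)
          have h4 : Real.log 4 = 2 * Real.log 2 := by
            rw [show (4:ℝ) = 2 ^ 2 by norm_num, Real.log_pow]; push_cast; ring
          push_cast; nlinarith [hlog2, h4, h5]
        · have h6 : Real.log 6 = Real.log 2 + Real.log 3 := by
            rw [show (6:ℝ) = 2 * 3 by norm_num, Real.log_mul (by norm_num) (by norm_num)]
          push_cast; nlinarith [hlog2, hlog3, h6]
        · have h6 : Real.log 6 = Real.log 2 + Real.log 3 := by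
            rw [show (6:ℝ) = 2 * 3 by norm_num, Real.log_mul (by norm_num) (by norm_num)]
          have h7 : Real.log 6 ≤ Real.log 7 := Real.log_le_log (by norm_num) (by norm_num)
          push_cast; nlinarith [hlog2, hlog3, h6, h7]
      linarith [hv, hsum, hfin]
  · intro h56
    have h56r : (56:ℝ) ≤ (S:ℝ) := by exact_mod_cast h56
    have hlog32 : Real.log 32 ≤ Real.log S := Real.log_le_log (by norm_num) (by linarith)
    have h32v : (3.465:ℝ) ≤ Real.log 32 := by
      rw [show (32:ℝ) = 2 ^ 5 by norm_num, Real.log_pow]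
      push_cast
      linarith
    have hdL : 4 ≤ (1.732:ℝ) * Real.log S := by nlinarith
    have hd : (1.732:ℝ) ≤ 2.3662 * (1.732 - 1) := by norm_num
    have hmain := sum_tangent S hSpos P h0 h1 hdL hd
    have hv := varLog_le_sum S P h1 ((1 - 1.732/2) * Real.log S)
    nlinarith [hv, hmain, sq_nonneg (Real.log S)]
end

section
/- Let S ≥ 1 and n ≥ 1 be integers and let F : M_S → ℝ be a bounded function. Let R(S, n) denote the minimax risk for estimating F(P) over P ∈ M_S under the multinomial sampling model with n samples, and for a real λ > 0 let R_P(S, λ) denote the minimax risk for estimating F(P) over P ∈ M_S under the Poissonized sampling model with parameter λ. Then R_P(S, 2n) − e^{−n/4}·sup_{P ∈ M_S} F(P)² ≤ R(S, n) ≤ 2·R_P(S, n/2). -/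
open scoped BigOperators ENNReal

/-- Joint pmf of independent Poisson observations `Z i ~ Poisson (lam * P i)`. -/
noncomputable def poissonPMF (S : ℕ) (lam : ℝ) (P : Fin S → ℝ) (z : Fin S → ℕ) : ℝ :=
  ∏ i, Real.exp (-(lam * P i)) * (lam * P i) ^ (z i) / (Nat.factorial (z i) : ℝ)

/-- Expected squared error of an estimator under the Poissonized model. -/
noncomputable def poissonRisk (S : ℕ) (lam : ℝ) (P : Fin S → ℝ) (t : ℝ)
    (est : (Fin S → ℕ) → ℝ) : ℝ≥0∞ :=
  ∑' z : Fin S → ℕ, ENNReal.ofReal (poissonPMF S lam P z * (est z - t) ^ 2)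

/-- Minimax risk for estimating `F P` under the Poissonized model with parameter `lam`. -/
noncomputable def poissonMinimax (S : ℕ) (lam : ℝ) (F : (Fin S → ℝ) → ℝ) : ℝ≥0∞ :=
  ⨅ est : (Fin S → ℕ) → ℝ, ⨆ P ∈ simplex S, poissonRisk S lam P (F P) est

open Finset

namespace PMAux

variable {S : ℕ}

/-- count vector of a tuple -/
def cnt {m : ℕ} (y : Fin m → Fin S) : Fin S → ℕ := fun i => (Finset.univ.filter fun j => y j = i).card

lemma cnt_eq_sum {m : ℕ} (y : Fin m → Fin S) (i : Fin S) :
    cnt y i = ∑ j, if y j = i then 1 else 0 := Finset.card_filter _ _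

lemma sum_cnt {m : ℕ} (y : Fin m → Fin S) : ∑ i, cnt y i = m := by
  have := Finset.card_eq_sum_card_fiberwise (fun j (_ : j ∈ (univ : Finset (Fin m))) => mem_univ (y j))
  simpa [cnt] using this.symm

/-- snoc equivalence -/
def snocE (m : ℕ) : ((Fin m → Fin S) × Fin S) ≃ (Fin (m+1) → Fin S) where
  toFun p := Fin.snoc p.1 p.2
  invFun x := (Fin.init x, x (Fin.last m))
  left_inv p := by simp [Fin.init_snoc, Fin.snoc_last]
  right_inv x := by simp [Fin.snoc_init_self]

lemma cnt_snoc {m : ℕ} (y : Fin m → Fin S) (i k : Fin S) :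
    cnt (Fin.snoc y i) k = cnt y k + if i = k then 1 else 0 := by
  rw [cnt_eq_sum, Fin.sum_univ_castSucc]
  simp only [Fin.snoc_castSucc, Fin.snoc_last, ← cnt_eq_sum]

lemma multPMF_eq_prod_pow {m : ℕ} (P : Fin S → ℝ) (y : Fin m → Fin S) :
    multPMF S m P y = ∏ i, P i ^ cnt y i := by
  rw [multPMF, Finset.prod_comp]
  refine Finset.prod_subset (Finset.subset_univ _) (fun i _ hi => ?_)
  have : cnt y i = 0 := by
    rw [cnt, Finset.card_eq_zero, Finset.filter_eq_empty_iff]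
    intro j _
    exact fun h => hi (Finset.mem_image.2 ⟨j, mem_univ j, h⟩)
  show P i ^ cnt y i = 1
  rw [this, pow_zero]

/-- number of words with given count vector -/
def Ncnt (S m : ℕ) (z : Fin S → ℕ) : ℕ :=
  ((Finset.univ : Finset (Fin m → Fin S)).filter fun y => cnt y = z).card

lemma Ncnt_eq_zero {m : ℕ} {z : Fin S → ℕ} (h : ∑ i, z i ≠ m) : Ncnt S m z = 0 := by
  rw [Ncnt, Finset.card_eq_zero, Finset.filter_eq_empty_iff]
  intro y _ hy
  exact h (hy ▸ sum_cnt y)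

lemma cnt_snoc_eq_iff {m : ℕ} (y : Fin m → Fin S) (i : Fin S) (z : Fin S → ℕ) :
    cnt (Fin.snoc y i) = z ↔ (z i ≠ 0 ∧ cnt y = Function.update z i (z i - 1)) := by
  constructor
  · intro h
    have hzi : z i = cnt y i + 1 := by rw [← h, cnt_snoc, if_pos rfl]
    refine ⟨by omega, funext fun k => ?_⟩
    by_cases hk : k = i
    · subst hk; rw [Function.update_self]; omega
    · rw [Function.update_of_ne hk, ← h, cnt_snoc, if_neg (fun hik => hk hik.symm), add_zero]
  · rintro ⟨h0, h⟩
    funext k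
    rw [cnt_snoc, h]
    by_cases hk : k = i
    · subst hk; rw [Function.update_self, if_pos rfl]; omega
    · rw [Function.update_of_ne hk, if_neg (fun hik => hk hik.symm), add_zero]


lemma Ncnt_succ (m : ℕ) (z : Fin S → ℕ) :
    Ncnt S (m+1) z =
      ∑ i : Fin S, if z i ≠ 0 then Ncnt S m (Function.update z i (z i - 1)) else 0 := by
  rw [Ncnt, Finset.card_filter]
  rw [← Equiv.sum_comp (snocE m) (fun x : Fin (m+1) → Fin S => if cnt x = z then 1 else 0)]
  rw [Fintype.sum_prod_type, Finset.sum_comm]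
  refine Finset.sum_congr rfl fun i _ => ?_
  have key : ∀ y : Fin m → Fin S, (cnt ((snocE m) (y, i)) = z)
      ↔ (z i ≠ 0 ∧ cnt y = Function.update z i (z i - 1)) := fun y => by
    rw [show (snocE m) (y, i) = Fin.snoc y i from rfl, cnt_snoc_eq_iff]
  by_cases hzi : z i ≠ 0
  · rw [if_pos hzi, Ncnt, Finset.card_filter]
    refine Finset.sum_congr rfl fun y _ => ?_
    rw [if_congr ((key y).trans (and_iff_right hzi)) rfl rfl]
  · rw [if_neg hzi]
    refine Finset.sum_eq_zero fun y _ => ?_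
    rw [if_neg fun h => hzi ((key y).1 h).1]

theorem Ncnt_mul_factorial (m : ℕ) (z : Fin S → ℕ) (hz : ∑ i, z i = m) :
    (Ncnt S m z) * ∏ i, (z i).factorial = m.factorial := by
  induction m generalizing z with
  | zero =>
    have hz0 : ∀ i, z i = 0 := by
      intro i
      exact Finset.sum_eq_zero_iff.1 hz i (mem_univ i)
    have h1 : Ncnt S 0 z = 1 := by
      rw [Ncnt]
      have : ((Finset.univ : Finset (Fin 0 → Fin S)).filter fun y => cnt y = z) = univ := by
        refine Finset.filter_true_of_mem fun y _ => funext fun i => ?_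
        rw [hz0 i]
        simp [cnt]
      rw [this]
      simp [Finset.card_univ]
    rw [h1]
    simp [hz0]
  | succ m ih =>
    rw [Ncnt_succ, Finset.sum_mul]
    have hterm : ∀ i : Fin S,
        (if z i ≠ 0 then Ncnt S m (Function.update z i (z i - 1)) else 0) * ∏ k, (z k).factorial
          = z i * m.factorial := by
      intro i
      by_cases hzi : z i ≠ 0
      · rw [if_pos hzi]
        have hsum : ∑ k, Function.update z i (z i - 1) k = m := by
          rw [Finset.sum_update_of_mem (mem_univ i)]
          have h3 := Finset.add_sum_erase univ z (mem_univ i)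
          rw [Finset.erase_eq] at h3
          omega
        have hprod : ∏ k, (z k).factorial
            = z i * ∏ k, (Function.update z i (z i - 1) k).factorial := by
          rw [← Finset.mul_prod_erase univ (fun k => (z k).factorial) (mem_univ i),
              ← Finset.mul_prod_erase univ
                (fun k => (Function.update z i (z i - 1) k).factorial) (mem_univ i)]
          have h1 : ∏ k ∈ univ.erase i, (Function.update z i (z i - 1) k).factorial
              = ∏ k ∈ univ.erase i, (z k).factorial :=
            Finset.prod_congr rfl fun k hk => by
              rw [Function.update_of_ne (Finset.ne_of_mem_erase hk)]
          rw [h1, Function.update_self, ← mul_assoc]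
          congr 1
          have h2 : z i = (z i - 1) + 1 := by omega
          rw [h2, Nat.factorial_succ, Nat.add_sub_cancel]
        rw [hprod, ← mul_assoc, mul_comm (Ncnt S m _) (z i), mul_assoc, ih _ hsum]
      · rw [if_neg hzi]
        push_neg at hzi
        rw [hzi, zero_mul, zero_mul]
    rw [Finset.sum_congr rfl fun i _ => hterm i, ← Finset.sum_mul, hz, Nat.factorial_succ]

lemma Ncnt_ne_zero {m : ℕ} {z : Fin S → ℕ} (hz : ∑ i, z i = m) : Ncnt S m z ≠ 0 := by
  intro h
  have := Ncnt_mul_factorial m z hz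
  rw [h, zero_mul] at this
  exact (Nat.factorial_ne_zero m) this.symm


lemma sum_multPMF (m : ℕ) (P : Fin S → ℝ) (hP1 : ∑ i, P i = 1) :
    ∑ y : Fin m → Fin S, multPMF S m P y = 1 := by
  have h := Finset.prod_univ_sum (fun _ : Fin m => (univ : Finset (Fin S))) (fun _ i => P i)
  rw [Fintype.piFinset_univ] at h
  rw [hP1] at h
  simpa [multPMF] using h.symm

lemma multPMF_snoc (n : ℕ) (P : Fin S → ℝ) (y : Fin n → Fin S) (i : Fin S) :
    multPMF S (n+1) P (Fin.snoc y i) = multPMF S n P y * P i := by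
  rw [multPMF, Fin.prod_univ_castSucc]
  simp [Fin.snoc_castSucc, Fin.snoc_last, multPMF]

lemma take_snoc {m n : ℕ} (hmn : m ≤ n) (hle : m ≤ n + 1) (y : Fin n → Fin S) (i : Fin S) :
    (fun j => (Fin.snoc y i : Fin (n+1) → Fin S) (Fin.castLE hle j))
      = fun j => y (Fin.castLE hmn j) := by
  funext j
  have h : Fin.castLE hle j = Fin.castSucc (Fin.castLE hmn j) := Fin.ext rfl
  rw [h, Fin.snoc_castSucc]

lemma marg {P : Fin S → ℝ} (hP1 : ∑ i, P i = 1) {m n : ℕ} (hmn : m ≤ n)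
    (h : (Fin m → Fin S) → ℝ) :
    ∑ x : Fin n → Fin S, multPMF S n P x * h (fun j => x (Fin.castLE hmn j))
      = ∑ y : Fin m → Fin S, multPMF S m P y * h y := by
  induction n, hmn using Nat.le_induction with
  | base => exact Finset.sum_congr rfl fun x _ => rfl
  | succ n hmn ih =>
    rw [← Equiv.sum_comp (snocE n), Fintype.sum_prod_type]
    rw [Finset.sum_congr rfl (fun y (_ : y ∈ univ) => Finset.sum_congr rfl (fun i _ => by
      rw [show (snocE n) (y, i) = Fin.snoc y i from rfl, multPMF_snoc, take_snoc hmn]))]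
    rw [Finset.sum_congr rfl (fun y (_ : y ∈ (univ : Finset (Fin n → Fin S))) => by
      rw [← Finset.sum_mul, ← Finset.mul_sum, hP1, mul_one])]
    exact ih

lemma jensen {ι : Type*} (s : Finset ι) (w a : ι → ℝ) (hw : ∀ i ∈ s, 0 ≤ w i)
    (h1 : ∑ i ∈ s, w i = 1) (t : ℝ) :
    (∑ i ∈ s, w i * a i - t) ^ 2 ≤ ∑ i ∈ s, w i * (a i - t) ^ 2 := by
  have hrw : ∑ i ∈ s, w i * (a i - t) = ∑ i ∈ s, w i * a i - t := by
    simp only [mul_sub]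
    rw [Finset.sum_sub_distrib, ← Finset.sum_mul, h1, one_mul]
  have cs := Finset.sum_mul_sq_le_sq_mul_sq s (fun i => Real.sqrt (w i))
      (fun i => Real.sqrt (w i) * (a i - t))
  have e1 : ∑ i ∈ s, Real.sqrt (w i) * (Real.sqrt (w i) * (a i - t)) = ∑ i ∈ s, w i * (a i - t) :=
    Finset.sum_congr rfl fun i hi => by rw [← mul_assoc, Real.mul_self_sqrt (hw i hi)]
  have e2 : ∑ i ∈ s, Real.sqrt (w i) ^ 2 = 1 := by
    rw [Finset.sum_congr rfl fun i hi => Real.sq_sqrt (hw i hi), h1]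
  have e3 : ∑ i ∈ s, (Real.sqrt (w i) * (a i - t)) ^ 2 = ∑ i ∈ s, w i * (a i - t) ^ 2 :=
    Finset.sum_congr rfl fun i hi => by rw [mul_pow, Real.sq_sqrt (hw i hi)]
  rw [e1, e2, e3, one_mul, hrw] at cs
  exact cs


lemma multPMF_nonneg {m : ℕ} {P : Fin S → ℝ} (hP0 : ∀ i, 0 ≤ P i) (y : Fin m → Fin S) :
    0 ≤ multPMF S m P y :=
  Finset.prod_nonneg fun j _ => hP0 _

/-- risk of estimating from the (counts of the) first m i.i.d. samples -/
noncomputable def seqRisk (S m : ℕ) (P : Fin S → ℝ) (t : ℝ) (est : (Fin S → ℕ) → ℝ) : ℝ :=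
  ∑ y : Fin m → Fin S, multPMF S m P y * (est (cnt y) - t) ^ 2

lemma seqRisk_nonneg {m : ℕ} {P : Fin S → ℝ} (hP0 : ∀ i, 0 ≤ P i) (t : ℝ)
    (est : (Fin S → ℕ) → ℝ) : 0 ≤ seqRisk S m P t est :=
  Finset.sum_nonneg fun y _ => mul_nonneg (multPMF_nonneg hP0 y) (sq_nonneg _)

theorem poissonRisk_eq (lam : ℝ) (hlam : 0 ≤ lam) {P : Fin S → ℝ} (hP : P ∈ simplex S)
    (t : ℝ) (est : (Fin S → ℕ) → ℝ) :
    poissonRisk S lam P t est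
      = ∑' m : ℕ, ENNReal.ofReal
          (Real.exp (-lam) * lam ^ m / (Nat.factorial m : ℝ) * seqRisk S m P t est) := by
  obtain ⟨hP0, hP1⟩ := hP
  have pmf_eq : ∀ z : Fin S → ℕ, poissonPMF S lam P z
      = Real.exp (-lam) * lam ^ (∑ i, z i) * (∏ i, P i ^ z i)
          / (∏ i, ((z i).factorial : ℝ)) := by
    intro z
    rw [poissonPMF, Finset.prod_div_distrib]
    congr 1
    · rw [Finset.prod_mul_distrib]
      have he : ∏ x : Fin S, Real.exp (-(lam * P x)) = Real.exp (-lam) := by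
        rw [← Real.exp_sum]
        congr 1
        rw [Finset.sum_neg_distrib, ← Finset.mul_sum, hP1, mul_one]
      have hp : ∏ x : Fin S, (lam * P x) ^ z x = lam ^ (∑ i, z i) * ∏ i, P i ^ z i := by
        simp only [mul_pow]
        rw [Finset.prod_mul_distrib, Finset.prod_pow_eq_pow_sum]
      rw [he, hp, ← mul_assoc]
  have term_eq : ∀ (m : ℕ) (z : Fin S → ℕ),
      (if ∑ i, z i = m then ENNReal.ofReal (poissonPMF S lam P z * (est z - t) ^ 2) else 0)
        = (Ncnt S m z : ℝ≥0∞) * ENNReal.ofReal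
            (Real.exp (-lam) * lam ^ m / (Nat.factorial m : ℝ)
              * ((∏ i, P i ^ z i) * (est z - t) ^ 2)) := by
    intro m z
    by_cases hz : ∑ i, z i = m
    · rw [if_pos hz, pmf_eq z, hz]
      have hN := Ncnt_mul_factorial m z hz
      have hNne : (Ncnt S m z : ℝ) ≠ 0 := Nat.cast_ne_zero.2 (Ncnt_ne_zero hz)
      have hNr : (Ncnt S m z : ℝ) * ∏ i, ((z i).factorial : ℝ) = (Nat.factorial m : ℝ) := by
        rw [← Nat.cast_prod]
        exact_mod_cast congrArg (Nat.cast (R := ℝ)) hN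
      rw [show (Ncnt S m z : ℝ≥0∞) = ENNReal.ofReal (Ncnt S m z : ℝ) from
        (ENNReal.ofReal_natCast _).symm]
      rw [← ENNReal.ofReal_mul (by positivity)]
      congr 1
      have hfac : (0:ℝ) < ∏ i, ((z i).factorial : ℝ) := by positivity
      have hm : (0:ℝ) < (Nat.factorial m : ℝ) := by positivity
      rw [← hNr]
      field_simp
    · rw [if_neg hz, Ncnt_eq_zero hz]
      simp
  have expand : ∀ z : Fin S → ℕ,
      ENNReal.ofReal (poissonPMF S lam P z * (est z - t) ^ 2)
        = ∑' m : ℕ, (if ∑ i, z i = m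
            then ENNReal.ofReal (poissonPMF S lam P z * (est z - t) ^ 2) else 0) := by
    intro z
    rw [tsum_eq_single (∑ i, z i) (fun m hm => if_neg fun h => hm h.symm)]
    exact (if_pos rfl).symm
  rw [poissonRisk]
  rw [tsum_congr expand, ENNReal.tsum_comm]
  refine tsum_congr fun m => ?_
  rw [tsum_congr (fun z => term_eq m z)]
  have hsupp : ∀ z ∉ Finset.image (cnt (S := S) (m := m)) univ,
      (Ncnt S m z : ℝ≥0∞) * ENNReal.ofReal
        (Real.exp (-lam) * lam ^ m / (Nat.factorial m : ℝ)
          * ((∏ i, P i ^ z i) * (est z - t) ^ 2)) = 0 := by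
    intro z hz
    have h0 : Ncnt S m z = 0 := by
      rw [Ncnt, Finset.card_eq_zero, Finset.filter_eq_empty_iff]
      exact fun y _ hy => hz (Finset.mem_image.2 ⟨y, mem_univ y, hy⟩)
    rw [h0]
    simp
  rw [tsum_eq_sum hsupp]
  have hc : 0 ≤ Real.exp (-lam) * lam ^ m / (Nat.factorial m : ℝ) := by positivity
  set c := Real.exp (-lam) * lam ^ m / (Nat.factorial m : ℝ) with hcdef
  have hR : ENNReal.ofReal (c * seqRisk S m P t est)
      = ∑ y : Fin m → Fin S, ENNReal.ofReal (c * ((∏ i, P i ^ cnt y i) * (est (cnt y) - t) ^ 2)) := by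
    rw [seqRisk, Finset.mul_sum]
    rw [ENNReal.ofReal_sum_of_nonneg (fun y _ =>
      mul_nonneg hc (mul_nonneg (multPMF_nonneg hP0 y) (sq_nonneg _)))]
    exact Finset.sum_congr rfl fun y _ => by rw [multPMF_eq_prod_pow]
  have hcomp := Finset.sum_comp (s := (univ : Finset (Fin m → Fin S)))
    (fun z : Fin S → ℕ => ENNReal.ofReal (c * ((∏ i, P i ^ z i) * (est z - t) ^ 2))) cnt
  rw [hR, hcomp]
  refine Finset.sum_congr rfl fun z hz => ?_
  rw [nsmul_eq_mul]
  rfl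


lemma multRisk_eq {n : ℕ} {P : Fin S → ℝ} (hP0 : ∀ i, 0 ≤ P i) (t : ℝ)
    (g : (Fin n → Fin S) → ℝ) :
    multRisk S n P t g
      = ENNReal.ofReal (∑ x : Fin n → Fin S, multPMF S n P x * (g x - t) ^ 2) := by
  rw [multRisk, tsum_fintype]
  exact (ENNReal.ofReal_sum_of_nonneg (fun x _ =>
    mul_nonneg (multPMF_nonneg hP0 x) (sq_nonneg _))).symm

end PMAux

namespace PMAux

/-- Poisson weights -/
noncomputable def pw (l : ℝ) (m : ℕ) : ℝ := Real.exp (-l) * (l ^ m / (Nat.factorial m : ℝ))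

lemma pw_nonneg {l : ℝ} (hl : 0 ≤ l) (m : ℕ) : 0 ≤ pw l m := by
  rw [pw]; positivity

lemma summable_pw (l : ℝ) : Summable (pw l) :=
  (Real.summable_pow_div_factorial l).mul_left _

lemma tsum_pw {l : ℝ} : ∑' m, pw l m = 1 := by
  have h : ∑' m : ℕ, l ^ m / ((Nat.factorial m) : ℝ) = Real.exp l := by
    rw [Real.exp_eq_exp_ℝ, NormedSpace.exp_eq_tsum_div]
  simp only [pw]
  rw [tsum_mul_left, h, ← Real.exp_add]
  simp

lemma partial_pw_le_one {l : ℝ} (hl : 0 ≤ l) (k : ℕ) : ∑ m ∈ Finset.range k, pw l m ≤ 1 := by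
  rw [← tsum_pw (l := l)]
  exact Summable.sum_le_tsum _ (fun m _ => pw_nonneg hl m) (summable_pw l)

lemma pw_tail_le {n : ℕ} (hn : 1 ≤ n) :
    ∑' i : ℕ, pw ((n:ℝ)/2) (i + n) ≤ 2 * pw ((n:ℝ)/2) n := by
  set l : ℝ := (n:ℝ)/2 with hl
  have hl0 : 0 ≤ l := by positivity
  have hbound : ∀ i : ℕ, pw l (i + n) ≤ pw l n * (1/2 : ℝ)^i := by
    intro i
    have hfact : ((Nat.factorial n : ℝ)) * ((n:ℝ))^i ≤ ((Nat.factorial (i+n)) : ℝ) := by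
      have hnat : Nat.factorial n * n^i ≤ Nat.factorial (n + i) :=
        le_trans (Nat.mul_le_mul_left _ (Nat.pow_le_pow_left (Nat.le_succ n) i))
          Nat.factorial_mul_pow_le_factorial
      rw [Nat.add_comm i n]
      exact_mod_cast hnat
    have hli : l ^ i = (n:ℝ)^i * (1/2 : ℝ)^i := by
      rw [← mul_pow]
      congr 1
      rw [hl]; ring
    have h1 : l ^ (i+n) / ((Nat.factorial (i+n)) : ℝ) ≤ l ^ n / (Nat.factorial n : ℝ) * (1/2 : ℝ)^i := by
      rw [div_mul_eq_mul_div, div_le_div_iff₀ (by positivity) (by positivity)]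
      have hsplit : l ^ (i+n) = l^n * ((n:ℝ)^i * (1/2 : ℝ)^i) := by
        rw [pow_add, hli]; ring
      rw [hsplit]
      have h2 : (0:ℝ) ≤ l ^ n * (1/2 : ℝ)^i := by positivity
      calc l^n * ((n:ℝ)^i * (1/2 : ℝ)^i) * (Nat.factorial n : ℝ)
          = (l^n * (1/2 : ℝ)^i) * ((Nat.factorial n : ℝ) * (n:ℝ)^i) := by ring
        _ ≤ (l^n * (1/2 : ℝ)^i) * ((Nat.factorial (i+n)) : ℝ) :=
            mul_le_mul_of_nonneg_left hfact h2
        _ = l^n * (1/2 : ℝ)^i * ((Nat.factorial (i+n)) : ℝ) := by ring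
    calc pw l (i+n) = Real.exp (-l) * (l^(i+n)/((Nat.factorial (i+n)) : ℝ)) := rfl
      _ ≤ Real.exp (-l) * (l^n/(Nat.factorial n : ℝ) * (1/2 : ℝ)^i) :=
          mul_le_mul_of_nonneg_left h1 (Real.exp_pos _).le
      _ = pw l n * (1/2 : ℝ)^i := by rw [pw]; ring
  have hs1 : Summable (fun i => pw l (i + n)) := (summable_nat_add_iff n).2 (summable_pw l)
  have hs2 : Summable (fun i : ℕ => pw l n * (1/2 : ℝ)^i) := summable_geometric_two.mul_left _
  calc ∑' i, pw l (i+n) ≤ ∑' i, pw l n * (1/2 : ℝ)^i := Summable.tsum_le_tsum hbound hs1 hs2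
    _ = pw l n * 2 := by rw [tsum_mul_left, tsum_geometric_two]
    _ = 2 * pw l n := mul_comm _ _

lemma two_le_exp_three_quarters : (2:ℝ) ≤ Real.exp (3/4) := by
  have h1 : (2.7182818283:ℝ)^3 ≤ (Real.exp 1)^3 :=
    pow_le_pow_left₀ (by norm_num) Real.exp_one_gt_d9.le 3
  have h3 : (16:ℝ) ≤ Real.exp 1 ^ 3 := le_trans (by norm_num) h1
  have h4 : (2:ℝ)^4 ≤ Real.exp (3/4) ^ 4 := by
    rw [← Real.exp_nat_mul]
    norm_num
    rw [show ((3:ℝ)) = (3:ℕ) * (1:ℝ) by norm_num, Real.exp_nat_mul]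
    exact h3
  exact le_of_pow_le_pow_left₀ (by norm_num) (Real.exp_pos _).le h4

lemma pw_head_le {n : ℕ} (hn : 1 ≤ n) :
    ∑ m ∈ Finset.range n, pw (2*(n:ℝ)) m ≤ Real.exp (-(n:ℝ)/4) := by
  have step1 : ∀ m ∈ Finset.range n, pw (2*(n:ℝ)) m
      ≤ Real.exp (-(2*(n:ℝ))) * ((2:ℝ)^n * ((n:ℝ)^m / (Nat.factorial m : ℝ))) := by
    intro m hm
    have hmn : m ≤ n := (Finset.mem_range.1 hm).le
    rw [pw, mul_pow]
    have h2 : (2:ℝ)^m ≤ (2:ℝ)^n := pow_le_pow_right₀ (by norm_num) hmn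
    have : (2:ℝ)^m * (n:ℝ)^m / (Nat.factorial m : ℝ)
        ≤ (2:ℝ)^n * ((n:ℝ)^m / (Nat.factorial m : ℝ)) := by
      rw [mul_div_assoc]
      exact mul_le_mul_of_nonneg_right h2 (by positivity)
    exact mul_le_mul_of_nonneg_left this (Real.exp_pos _).le
  calc ∑ m ∈ Finset.range n, pw (2*(n:ℝ)) m
      ≤ ∑ m ∈ Finset.range n, Real.exp (-(2*(n:ℝ))) * ((2:ℝ)^n * ((n:ℝ)^m / (Nat.factorial m : ℝ))) :=
        Finset.sum_le_sum step1
    _ = Real.exp (-(2*(n:ℝ))) * (2:ℝ)^n * ∑ m ∈ Finset.range n, (n:ℝ)^m / (Nat.factorial m : ℝ) := by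
        rw [← Finset.mul_sum, ← Finset.mul_sum, mul_assoc]
    _ ≤ Real.exp (-(2*(n:ℝ))) * (2:ℝ)^n * Real.exp (n:ℝ) := by
        refine mul_le_mul_of_nonneg_left (Real.sum_le_exp_of_nonneg (by positivity) n) (by positivity)
    _ = (2 * Real.exp (-1))^n := by
        rw [mul_pow, ← Real.exp_nat_mul]
        rw [mul_comm (Real.exp (-(2*(n:ℝ)))) ((2:ℝ)^n), mul_assoc, ← Real.exp_add]
        congr 1
        push_cast
        ring
    _ ≤ (Real.exp (-(1:ℝ)/4))^n := by
        refine pow_le_pow_left₀ (by positivity) ?_ n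
        have := two_le_exp_three_quarters
        have h := mul_le_mul_of_nonneg_right this (Real.exp_pos (-1)).le
        calc 2 * Real.exp (-1) ≤ Real.exp (3/4) * Real.exp (-1) := h
          _ = Real.exp (-(1:ℝ)/4) := by rw [← Real.exp_add]; norm_num
    _ = Real.exp (-(n:ℝ)/4) := by
        rw [← Real.exp_nat_mul]
        congr 1
        push_cast
        ring

end PMAux

namespace PMAux

variable {S : ℕ}

/-- truncation of a tuple (via mod indexing) -/
def takeT (S n : ℕ) (hn : 0 < n) (m : ℕ) (x : Fin n → Fin S) : Fin m → Fin S :=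
  fun j => x ⟨(j:ℕ) % n, Nat.mod_lt _ hn⟩

lemma takeT_eq_castLE {n m : ℕ} (hn : 0 < n) (hmn : m ≤ n) (x : Fin n → Fin S) :
    takeT S n hn m x = fun j => x (Fin.castLE hmn j) := by
  funext j
  show x _ = x _
  congr 1
  exact Fin.ext (Nat.mod_eq_of_lt (lt_of_lt_of_le j.isLt hmn))

/-- weights for the multinomial-from-Poisson estimator -/
noncomputable def wB (n : ℕ) (m : ℕ) : ℝ :=
  if m < n then pw ((n:ℝ)/2) m else 1 - ∑ k ∈ Finset.range n, pw ((n:ℝ)/2) k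

/-- multinomial estimator built from a Poisson estimator -/
noncomputable def gB (S n : ℕ) (hn : 0 < n) (est : (Fin S → ℕ) → ℝ) (x : Fin n → Fin S) : ℝ :=
  ∑ m ∈ Finset.range (n+1), wB n m * est (cnt (takeT S n hn m x))

theorem multRisk_gB_le {n : ℕ} (hn : 0 < n) (est : (Fin S → ℕ) → ℝ) (t : ℝ)
    {P : Fin S → ℝ} (hP : P ∈ simplex S) :
    multRisk S n P t (gB S n hn est) ≤ 2 * poissonRisk S ((n:ℝ)/2) P t est := by
  obtain ⟨hP0, hP1⟩ := hP
  have hl0 : (0:ℝ) ≤ (n:ℝ)/2 := by positivity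
  have hw0 : ∀ m ∈ Finset.range (n+1), 0 ≤ wB n m := by
    intro m _
    rw [wB]
    split
    · exact pw_nonneg hl0 m
    · linarith [partial_pw_le_one hl0 n]
  have hw1 : ∑ m ∈ Finset.range (n+1), wB n m = 1 := by
    have hcongr : ∀ m ∈ Finset.range n, wB n m = pw ((n:ℝ)/2) m := fun m hm => by
      rw [wB, if_pos (Finset.mem_range.1 hm)]
    rw [Finset.sum_range_succ, Finset.sum_congr rfl hcongr, wB, if_neg (lt_irrefl n)]
    ring
  -- tail weight bound
  have hwn : wB n n ≤ 2 * pw ((n:ℝ)/2) n := by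
    rw [wB, if_neg (lt_irrefl n)]
    have hsplit := (summable_pw ((n:ℝ)/2)).sum_add_tsum_nat_add n
    rw [tsum_pw] at hsplit
    have : 1 - ∑ k ∈ Finset.range n, pw ((n:ℝ)/2) k = ∑' i, pw ((n:ℝ)/2) (i + n) := by
      linarith
    rw [this]
    exact pw_tail_le hn
  -- real risk bound
  have hsum : ∑ x : Fin n → Fin S, multPMF S n P x * (gB S n hn est x - t)^2
      ≤ ∑ m ∈ Finset.range (n+1), wB n m * seqRisk S m P t est := by
    have step1 : ∀ x : Fin n → Fin S, multPMF S n P x * (gB S n hn est x - t)^2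
        ≤ ∑ m ∈ Finset.range (n+1), wB n m * (multPMF S n P x * (est (cnt (takeT S n hn m x)) - t)^2) := by
      intro x
      have hj := jensen (Finset.range (n+1)) (wB n)
        (fun m => est (cnt (takeT S n hn m x))) hw0 hw1 t
      calc multPMF S n P x * (gB S n hn est x - t)^2
          ≤ multPMF S n P x * ∑ m ∈ Finset.range (n+1), wB n m * (est (cnt (takeT S n hn m x)) - t)^2 :=
            mul_le_mul_of_nonneg_left hj (multPMF_nonneg hP0 x)
        _ = ∑ m ∈ Finset.range (n+1), wB n m * (multPMF S n P x * (est (cnt (takeT S n hn m x)) - t)^2) := by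
            rw [Finset.mul_sum]
            exact Finset.sum_congr rfl fun m _ => by ring
    calc ∑ x : Fin n → Fin S, multPMF S n P x * (gB S n hn est x - t)^2
        ≤ ∑ x : Fin n → Fin S, ∑ m ∈ Finset.range (n+1),
            wB n m * (multPMF S n P x * (est (cnt (takeT S n hn m x)) - t)^2) :=
          Finset.sum_le_sum fun x _ => step1 x
      _ = ∑ m ∈ Finset.range (n+1), wB n m *
            ∑ x : Fin n → Fin S, multPMF S n P x * (est (cnt (takeT S n hn m x)) - t)^2 := by
          rw [Finset.sum_comm]
          exact Finset.sum_congr rfl fun m _ => by rw [Finset.mul_sum]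
      _ = ∑ m ∈ Finset.range (n+1), wB n m * seqRisk S m P t est := by
          refine Finset.sum_congr rfl fun m hm => ?_
          have hmn : m ≤ n := Nat.lt_succ_iff.1 (Finset.mem_range.1 hm)
          congr 1
          have hx : ∀ x : Fin n → Fin S, (est (cnt (takeT S n hn m x)) - t)^2
              = (fun y : Fin m → Fin S => (est (cnt y) - t)^2) (fun j => x (Fin.castLE hmn j)) := by
            intro x
            rw [takeT_eq_castLE hn hmn]
          rw [Finset.sum_congr rfl fun x _ => by rw [hx x]]
          exact marg hP1 hmn (fun y => (est (cnt y) - t)^2)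
  -- pass to ENNReal
  have hb : poissonRisk S ((n:ℝ)/2) P t est
      = ∑' m : ℕ, ENNReal.ofReal (pw ((n:ℝ)/2) m * seqRisk S m P t est) := by
    rw [poissonRisk_eq _ hl0 ⟨hP0, hP1⟩ t est]
    exact tsum_congr fun m => by rw [pw, mul_div_assoc]
  rw [multRisk_eq hP0 t _, hb]
  have hseq : ∀ m : ℕ, 0 ≤ seqRisk S m P t est := fun m => seqRisk_nonneg hP0 t est
  calc ENNReal.ofReal (∑ x : Fin n → Fin S, multPMF S n P x * (gB S n hn est x - t)^2)
      ≤ ENNReal.ofReal (∑ m ∈ Finset.range (n+1), wB n m * seqRisk S m P t est) :=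
        ENNReal.ofReal_le_ofReal hsum
    _ ≤ ENNReal.ofReal (∑ m ∈ Finset.range n, pw ((n:ℝ)/2) m * seqRisk S m P t est
          + (2 * pw ((n:ℝ)/2) n) * seqRisk S n P t est) := by
        refine ENNReal.ofReal_le_ofReal ?_
        have hcongr2 : ∀ m ∈ Finset.range n, wB n m * seqRisk S m P t est
            = pw ((n:ℝ)/2) m * seqRisk S m P t est := fun m hm => by
          rw [wB, if_pos (Finset.mem_range.1 hm)]
        rw [Finset.sum_range_succ, Finset.sum_congr rfl hcongr2]
        exact add_le_add_right (mul_le_mul_of_nonneg_right hwn (hseq n)) _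
    _ ≤ ENNReal.ofReal (∑ m ∈ Finset.range n, pw ((n:ℝ)/2) m * seqRisk S m P t est)
          + ENNReal.ofReal ((2 * pw ((n:ℝ)/2) n) * seqRisk S n P t est) :=
        ENNReal.ofReal_add_le
    _ ≤ ∑ m ∈ Finset.range n, ENNReal.ofReal (pw ((n:ℝ)/2) m * seqRisk S m P t est)
          + 2 * ENNReal.ofReal (pw ((n:ℝ)/2) n * seqRisk S n P t est) := by
        refine add_le_add ?_ ?_
        · rw [ENNReal.ofReal_sum_of_nonneg (fun m _ =>
            mul_nonneg (pw_nonneg hl0 m) (hseq m))]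
        · rw [mul_assoc, ENNReal.ofReal_mul (by norm_num : (0:ℝ) ≤ 2)]
          simp [ENNReal.ofReal_ofNat]
    _ ≤ 2 * ∑' m : ℕ, ENNReal.ofReal (pw ((n:ℝ)/2) m * seqRisk S m P t est) := by
        have h1 : ∑ m ∈ Finset.range n, ENNReal.ofReal (pw ((n:ℝ)/2) m * seqRisk S m P t est)
              + 2 * ENNReal.ofReal (pw ((n:ℝ)/2) n * seqRisk S n P t est)
            ≤ 2 * (∑ m ∈ Finset.range (n+1), ENNReal.ofReal (pw ((n:ℝ)/2) m * seqRisk S m P t est)) := by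
          rw [Finset.sum_range_succ, mul_add]
          exact add_le_add_left (le_mul_of_one_le_left zero_le one_le_two) _
        exact h1.trans (mul_le_mul_right (ENNReal.sum_le_tsum _) 2)

end PMAux

namespace PMAux

variable {S : ℕ}

/-- Poisson estimator built from a multinomial estimator, by averaging over orderings -/
noncomputable def estA (S n : ℕ) (hn : 0 < n) (g : (Fin n → Fin S) → ℝ) (z : Fin S → ℕ) : ℝ :=
  if h : (∑ i, z i) < n then 0 else
    (∑ y ∈ Finset.univ.filter (fun y : Fin (∑ i, z i) → Fin S => cnt y = z),
        g (fun j => y ⟨(j:ℕ) % (∑ i, z i), Nat.mod_lt _ (by omega)⟩))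
      / (Ncnt S (∑ i, z i) z)

lemma estA_eq {n : ℕ} (hn : 0 < n) (g : (Fin n → Fin S) → ℝ) (m : ℕ) (z : Fin S → ℕ)
    (hz : ∑ i, z i = m) (hm : n ≤ m) :
    estA S n hn g z = (∑ y ∈ Finset.univ.filter (fun y : Fin m → Fin S => cnt y = z),
        g (fun j => y ⟨(j:ℕ) % m, Nat.mod_lt _ (by omega)⟩)) / (Ncnt S m z) := by
  subst hz
  rw [estA, dif_neg (by omega)]

lemma seqRisk_estA_low {n m : ℕ} (hn : 0 < n) (hm : m < n) {P : Fin S → ℝ}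
    (hP1 : ∑ i, P i = 1) (t : ℝ) (g : (Fin n → Fin S) → ℝ) :
    seqRisk S m P t (estA S n hn g) = t ^ 2 := by
  have h0 : ∀ y : Fin m → Fin S, estA S n hn g (cnt y) = 0 := fun y => by
    rw [estA, dif_pos (by rw [sum_cnt]; exact hm)]
  rw [seqRisk, Finset.sum_congr rfl (fun y _ => by rw [h0 y, zero_sub, neg_sq])]
  rw [← Finset.sum_mul, sum_multPMF m P hP1, one_mul]

lemma seqRisk_estA_high {n m : ℕ} (hn : 0 < n) (hm : n ≤ m) {P : Fin S → ℝ}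
    (hP0 : ∀ i, 0 ≤ P i) (hP1 : ∑ i, P i = 1) (t : ℝ) (g : (Fin n → Fin S) → ℝ) :
    seqRisk S m P t (estA S n hn g)
      ≤ ∑ x : Fin n → Fin S, multPMF S n P x * (g x - t) ^ 2 := by
  have hm0 : 0 < m := lt_of_lt_of_le hn hm
  set q : (Fin m → Fin S) → ℝ := fun y' => g (fun j => y' ⟨(j:ℕ) % m, Nat.mod_lt _ hm0⟩)
    with hq
  -- termwise Jensen
  have hJ : ∀ y : Fin m → Fin S, (estA S n hn g (cnt y) - t) ^ 2
      ≤ (∑ y' ∈ Finset.univ.filter (fun y' : Fin m → Fin S => cnt y' = cnt y),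
          (q y' - t) ^ 2) / (Ncnt S m (cnt y)) := by
    intro y
    have hNz : Ncnt S m (cnt y) ≠ 0 := Ncnt_ne_zero (sum_cnt y)
    have hNr : (0:ℝ) < (Ncnt S m (cnt y) : ℝ) := by
      exact_mod_cast Nat.pos_of_ne_zero hNz
    rw [estA_eq hn g m (cnt y) (sum_cnt y) hm]
    have hj := jensen (Finset.univ.filter (fun y' : Fin m → Fin S => cnt y' = cnt y))
      (fun _ => 1 / (Ncnt S m (cnt y) : ℝ)) q
      (fun _ _ => by positivity)
      (by
        rw [Finset.sum_const, nsmul_eq_mul]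
        rw [show ((Finset.univ.filter (fun y' : Fin m → Fin S => cnt y' = cnt y)).card : ℝ)
          = (Ncnt S m (cnt y) : ℝ) from rfl]
        field_simp) t
    have e1 : ∑ y' ∈ Finset.univ.filter (fun y' : Fin m → Fin S => cnt y' = cnt y),
        (1 / (Ncnt S m (cnt y) : ℝ)) * q y'
        = (∑ y' ∈ Finset.univ.filter (fun y' : Fin m → Fin S => cnt y' = cnt y), q y')
            / (Ncnt S m (cnt y) : ℝ) := by
      rw [Finset.sum_div]
      exact Finset.sum_congr rfl fun y' _ => one_div_mul_eq_div _ _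
    have e2 : ∑ y' ∈ Finset.univ.filter (fun y' : Fin m → Fin S => cnt y' = cnt y),
        (1 / (Ncnt S m (cnt y) : ℝ)) * (q y' - t) ^ 2
        = (∑ y' ∈ Finset.univ.filter (fun y' : Fin m → Fin S => cnt y' = cnt y), (q y' - t) ^ 2)
            / (Ncnt S m (cnt y) : ℝ) := by
      rw [Finset.sum_div]
      exact Finset.sum_congr rfl fun y' _ => one_div_mul_eq_div _ _
    rw [e1, e2] at hj
    exact hj
  -- sum up and regroup fibers
  set f : (Fin S → ℕ) → ℝ := fun z => (∏ i, P i ^ z i) *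
      ((∑ y' ∈ Finset.univ.filter (fun y' : Fin m → Fin S => cnt y' = z), (q y' - t) ^ 2)
        / (Ncnt S m z)) with hf
  have step1 : seqRisk S m P t (estA S n hn g) ≤ ∑ y : Fin m → Fin S, f (cnt y) := by
    rw [seqRisk]
    refine Finset.sum_le_sum fun y _ => ?_
    rw [hf]
    simp only
    rw [← multPMF_eq_prod_pow]
    exact mul_le_mul_of_nonneg_left (hJ y) (multPMF_nonneg hP0 y)
  have step2 : ∑ y : Fin m → Fin S, f (cnt y)
      = ∑ z ∈ Finset.image cnt (Finset.univ : Finset (Fin m → Fin S)),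
          (∏ i, P i ^ z i) *
            (∑ y' ∈ Finset.univ.filter (fun y' : Fin m → Fin S => cnt y' = z), (q y' - t) ^ 2) := by
    rw [Finset.sum_comp f cnt]
    refine Finset.sum_congr rfl fun z hz => ?_
    obtain ⟨y0, _, hy0⟩ := Finset.mem_image.1 hz
    have hNz : Ncnt S m z ≠ 0 := Ncnt_ne_zero (hy0 ▸ sum_cnt y0)
    have hNr : ((Ncnt S m z : ℝ)) ≠ 0 := Nat.cast_ne_zero.2 hNz
    rw [nsmul_eq_mul, hf]
    simp only
    rw [show (((Finset.univ.filter (fun y' : Fin m → Fin S => cnt y' = z)).card : ℕ) : ℝ)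
      = ((Ncnt S m z : ℕ) : ℝ) from rfl]
    field_simp
  have step3 : ∑ z ∈ Finset.image cnt (Finset.univ : Finset (Fin m → Fin S)),
      (∏ i, P i ^ z i) *
        (∑ y' ∈ Finset.univ.filter (fun y' : Fin m → Fin S => cnt y' = z), (q y' - t) ^ 2)
      = ∑ y' : Fin m → Fin S, multPMF S m P y' * (q y' - t) ^ 2 := by
    rw [← Finset.sum_fiberwise_of_maps_to
      (fun (y' : Fin m → Fin S) (_ : y' ∈ Finset.univ) => Finset.mem_image_of_mem cnt (Finset.mem_univ y'))
      (fun y' => multPMF S m P y' * (q y' - t) ^ 2)]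
    refine Finset.sum_congr rfl fun z _ => ?_
    rw [Finset.mul_sum]
    refine Finset.sum_congr rfl fun y' hy' => ?_
    rw [multPMF_eq_prod_pow, (Finset.mem_filter.1 hy').2]
  have step4 : ∑ y' : Fin m → Fin S, multPMF S m P y' * (q y' - t) ^ 2
      = ∑ x : Fin n → Fin S, multPMF S n P x * (g x - t) ^ 2 := by
    have hmod : ∀ y' : Fin m → Fin S, q y'
        = g (fun j => y' (Fin.castLE hm j)) := by
      intro y'
      rw [hq]
      simp only
      congr 1
      funext j
      congr 1
      exact Fin.ext (Nat.mod_eq_of_lt (lt_of_lt_of_le j.isLt hm))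
    rw [Finset.sum_congr rfl fun y' _ => by rw [hmod y']]
    exact marg hP1 hm (fun v => (g v - t) ^ 2)
  calc seqRisk S m P t (estA S n hn g) ≤ ∑ y : Fin m → Fin S, f (cnt y) := step1
    _ = _ := step2
    _ = _ := step3
    _ = _ := step4

theorem poissonRisk_estA_le {n : ℕ} (hn : 0 < n) (g : (Fin n → Fin S) → ℝ) (t : ℝ)
    {P : Fin S → ℝ} (hP : P ∈ simplex S) :
    poissonRisk S (2 * (n:ℝ)) P t (estA S n hn g)
      ≤ multRisk S n P t g
        + ENNReal.ofReal (Real.exp (-(n:ℝ)/4)) * ENNReal.ofReal (t ^ 2) := by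
  obtain ⟨hP0, hP1⟩ := hP
  have hl0 : (0:ℝ) ≤ 2 * (n:ℝ) := by positivity
  have hb : poissonRisk S (2 * (n:ℝ)) P t (estA S n hn g)
      = ∑' m : ℕ, ENNReal.ofReal (pw (2 * (n:ℝ)) m * seqRisk S m P t (estA S n hn g)) := by
    rw [poissonRisk_eq _ hl0 ⟨hP0, hP1⟩ t _]
    exact tsum_congr fun m => by rw [pw, mul_div_assoc]
  rw [hb, multRisk_eq hP0 t g]
  set RM : ℝ := ∑ x : Fin n → Fin S, multPMF S n P x * (g x - t) ^ 2 with hRM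
  have hRM0 : 0 ≤ RM :=
    Finset.sum_nonneg fun x _ => mul_nonneg (multPMF_nonneg hP0 x) (sq_nonneg _)
  have hterm : ∀ m : ℕ, ENNReal.ofReal (pw (2 * (n:ℝ)) m * seqRisk S m P t (estA S n hn g))
      ≤ (if m < n then ENNReal.ofReal (pw (2 * (n:ℝ)) m * t ^ 2) else 0)
        + ENNReal.ofReal (pw (2 * (n:ℝ)) m) * ENNReal.ofReal RM := by
    intro m
    by_cases hm : m < n
    · rw [if_pos hm, seqRisk_estA_low hn hm hP1 t g]
      exact le_self_add
    · rw [if_neg hm, zero_add, ← ENNReal.ofReal_mul (pw_nonneg hl0 m)]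
      refine ENNReal.ofReal_le_ofReal ?_
      exact mul_le_mul_of_nonneg_left
        (seqRisk_estA_high hn (le_of_not_gt hm) hP0 hP1 t g) (pw_nonneg hl0 m)
  calc ∑' m : ℕ, ENNReal.ofReal (pw (2 * (n:ℝ)) m * seqRisk S m P t (estA S n hn g))
      ≤ ∑' m : ℕ, ((if m < n then ENNReal.ofReal (pw (2 * (n:ℝ)) m * t ^ 2) else 0)
          + ENNReal.ofReal (pw (2 * (n:ℝ)) m) * ENNReal.ofReal RM) :=
        ENNReal.tsum_le_tsum hterm
    _ = (∑' m : ℕ, (if m < n then ENNReal.ofReal (pw (2 * (n:ℝ)) m * t ^ 2) else 0))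
          + (∑' m : ℕ, ENNReal.ofReal (pw (2 * (n:ℝ)) m)) * ENNReal.ofReal RM := by
        rw [ENNReal.tsum_add, ENNReal.tsum_mul_right]
    _ ≤ ENNReal.ofReal (Real.exp (-(n:ℝ)/4)) * ENNReal.ofReal (t ^ 2) + ENNReal.ofReal RM := by
        refine add_le_add ?_ ?_
        · have h1 : (∑' m : ℕ, (if m < n then ENNReal.ofReal (pw (2 * (n:ℝ)) m * t ^ 2) else 0))
              = ∑ m ∈ Finset.range n, ENNReal.ofReal (pw (2 * (n:ℝ)) m * t ^ 2) := by
            rw [tsum_eq_sum (s := Finset.range n)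
              (fun m hm => if_neg (fun h => hm (Finset.mem_range.2 h)))]
            exact Finset.sum_congr rfl fun m hm => if_pos (Finset.mem_range.1 hm)
          rw [h1, ← ENNReal.ofReal_sum_of_nonneg
            (fun m _ => mul_nonneg (pw_nonneg hl0 m) (sq_nonneg t)), ← ENNReal.ofReal_mul
            (Real.exp_nonneg _)]
          refine ENNReal.ofReal_le_ofReal ?_
          rw [← Finset.sum_mul]
          refine mul_le_mul_of_nonneg_right ?_ (sq_nonneg t)
          exact pw_head_le (by omega)
        · have h2 : ∑' m : ℕ, ENNReal.ofReal (pw (2 * (n:ℝ)) m) = 1 := by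
            rw [← ENNReal.ofReal_tsum_of_nonneg (pw_nonneg hl0) (summable_pw _), tsum_pw]
            exact ENNReal.ofReal_one
          rw [h2, one_mul]
    _ = ENNReal.ofReal RM + ENNReal.ofReal (Real.exp (-(n:ℝ)/4)) * ENNReal.ofReal (t ^ 2) :=
        add_comm _ _

end PMAux


open PMAux

theorem poisson_multinomial_minimax_comparison
    (S n : ℕ) (hS : 1 ≤ S) (hn : 1 ≤ n)
    (F : (Fin S → ℝ) → ℝ) (hF : ∃ B : ℝ, ∀ P ∈ simplex S, |F P| ≤ B) :
    poissonMinimax S (2 * (n : ℝ)) F -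
        ENNReal.ofReal (Real.exp (-(n : ℝ) / 4)) *
          (⨆ P ∈ simplex S, ENNReal.ofReal ((F P) ^ 2))
      ≤ multMinimax S n F ∧
    multMinimax S n F ≤ 2 * poissonMinimax S ((n : ℝ) / 2) F := by
  have hn0 : 0 < n := hn
  constructor
  · rw [tsub_le_iff_right]
    have key : poissonMinimax S (2 * (n:ℝ)) F
        ≤ multMinimax S n F + ENNReal.ofReal (Real.exp (-(n:ℝ)/4)) *
            (⨆ P ∈ simplex S, ENNReal.ofReal ((F P)^2)) := by
      rw [multMinimax, ENNReal.iInf_add]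
      refine le_iInf fun g => ?_
      refine le_trans (iInf_le _ (estA S n hn0 g)) ?_
      refine iSup₂_le fun P hP => ?_
      refine le_trans (poissonRisk_estA_le hn0 g (F P) hP) ?_
      refine add_le_add ?_ (mul_le_mul_right ?_ _)
      · exact le_iSup₂ (f := fun P (_ : P ∈ simplex S) => multRisk S n P (F P) g) P hP
      · exact le_iSup₂ (f := fun P (_ : P ∈ simplex S) => ENNReal.ofReal ((F P)^2)) P hP
    exact key
  · have key : ∀ est : (Fin S → ℕ) → ℝ,
        multMinimax S n F ≤ 2 * ⨆ P ∈ simplex S, poissonRisk S ((n:ℝ)/2) P (F P) est := by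
      intro est
      refine le_trans (iInf_le _ (gB S n hn0 est)) ?_
      refine iSup₂_le fun P hP => ?_
      refine (multRisk_gB_le hn0 est (F P) hP).trans (mul_le_mul_right ?_ 2)
      exact le_iSup₂ (f := fun P (_ : P ∈ simplex S) => poissonRisk S ((n:ℝ)/2) P (F P) est) P hP
    rw [poissonMinimax, ENNReal.mul_iInf_of_ne (by norm_num) (by norm_num)]
    exact le_iInf key
end

section
/- For every α ∈ (0, 1) and every integer L ≥ 1 there exist Borel probability measures ν₀ and ν₁ on the interval [0, 1] such that (i) ∫ t^l dν₁(t) = ∫ t^l dν₀(t) for every integer l with 0 ≤ l ≤ L, and (ii) ∫ t^α dν₁(t) − ∫ t^α dν₀(t) = 2·E_L[x^α]_{[0,1]}. -/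
open scoped BigOperators

/-- Best uniform polynomial approximation error of `f` on `[a, b]` by real polynomials
of degree at most `L`. -/
noncomputable def approxErr (f : ℝ → ℝ) (L : ℕ) (a b : ℝ) : ℝ :=
  ⨅ p : {p : Polynomial ℝ // p.natDegree ≤ L},
    ⨆ x : Set.Icc a b, |f (x : ℝ) - (p : Polynomial ℝ).eval (x : ℝ)|

open MeasureTheory

section Aux

open Set

lemma aux_isCompact_convexHull {n : ℕ} {S : Set (Fin n → ℝ)} (hS : IsCompact S)
    (hne : S.Nonempty) : IsCompact (convexHull ℝ S) := by
  classical
  obtain ⟨x₀, hx₀⟩ := hne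
  set m := n + 1 with hm
  set D : Set ((Fin m → ℝ) × (Fin m → Fin n → ℝ)) :=
    (stdSimplex ℝ (Fin m)) ×ˢ (Set.univ.pi fun _ => S) with hD
  have hDc : IsCompact D := (isCompact_stdSimplex ℝ _).prod (isCompact_univ_pi fun _ => hS)
  have hΦ : Continuous (fun q : (Fin m → ℝ) × (Fin m → Fin n → ℝ) => ∑ i, q.1 i • q.2 i) := by
    refine continuous_finset_sum _ fun i _ => ?_
    exact ((continuous_apply i).comp continuous_fst).smul
      ((continuous_apply i).comp continuous_snd)
  have himage : (fun q : (Fin m → ℝ) × (Fin m → Fin n → ℝ) => ∑ i, q.1 i • q.2 i) '' D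
      = convexHull ℝ S := by
    apply Set.Subset.antisymm
    · rintro x ⟨⟨w, z⟩, ⟨hw, hz⟩, rfl⟩
      have hw1 : ∑ i, w i = 1 := hw.2
      show (∑ i, w i • z i) ∈ convexHull ℝ S
      rw [← Finset.univ.centerMass_eq_of_sum_1 _ hw1]
      exact Finset.univ.centerMass_mem_convexHull (fun i _ => hw.1 i)
        (hw1.symm ▸ one_pos) (fun i _ => hz i (Set.mem_univ i))
    · intro x hx
      obtain ⟨ι, hfin, z, w, hrange, haff, hpos, hsum, hrepr⟩ :=
        eq_pos_convex_span_of_mem_convexHull hx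
      have hcard : Fintype.card ι ≤ m := by
        have h1 := haff.card_le_finrank_succ
        have h2 : Module.finrank ℝ (vectorSpan ℝ (Set.range z)) ≤ n := by
          have := Submodule.finrank_le (vectorSpan ℝ (Set.range z))
          simpa using this
        omega
      obtain ⟨e⟩ : Nonempty (ι ↪ Fin m) := by
        apply Function.Embedding.nonempty_of_card_le
        simpa using hcard
      set w' : Fin m → ℝ := fun j => if h : ∃ i, e i = j then w h.choose else 0 with hw'
      set z' : Fin m → Fin n → ℝ := fun j => if h : ∃ i, e i = j then z h.choose else x₀ with hz'
      have hwe : ∀ i, w' (e i) = w i := by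
        intro i
        have h : ∃ i', e i' = e i := ⟨i, rfl⟩
        simp only [hw', dif_pos h]
        rw [e.injective h.choose_spec]
      have hze : ∀ i, z' (e i) = z i := by
        intro i
        have h : ∃ i', e i' = e i := ⟨i, rfl⟩
        simp only [hz', dif_pos h]
        rw [e.injective h.choose_spec]
      refine ⟨⟨w', z'⟩, ⟨⟨fun j => ?_, ?_⟩, fun j _ => ?_⟩, ?_⟩
      · by_cases h : ∃ i, e i = j
        · simp only [hw', dif_pos h]; exact (hpos _).le
        · simp [hw', dif_neg h]
      · have : ∑ j : Fin m, w' j = ∑ j ∈ Finset.univ.image e, w' j := by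
          refine (Finset.sum_subset (Finset.subset_univ _) fun j _ hj => ?_).symm
          have h : ¬ ∃ i, e i = j := by
            intro ⟨i, hi⟩; exact hj (Finset.mem_image.2 ⟨i, Finset.mem_univ i, hi⟩)
          simp [hw', dif_neg h]
        rw [this, Finset.sum_image (fun a _ b _ h => e.injective h)]
        simp only [hwe]
        exact hsum
      · by_cases h : ∃ i, e i = j
        · simp only [hz', dif_pos h]
          exact hrange ⟨_, rfl⟩
        · simpa [hz', dif_neg h] using hx₀
      · show ∑ j : Fin m, w' j • z' j = x
        have : ∑ j : Fin m, w' j • z' j = ∑ j ∈ Finset.univ.image e, w' j • z' j := by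
          refine (Finset.sum_subset (Finset.subset_univ _) fun j _ hj => ?_).symm
          have h : ¬ ∃ i, e i = j := by
            intro ⟨i, hi⟩; exact hj (Finset.mem_image.2 ⟨i, Finset.mem_univ i, hi⟩)
          simp [hw', dif_neg h]
        rw [this, Finset.sum_image (fun a _ b _ h => e.injective h)]
        simp only [hwe, hze]
        exact hrepr
  rw [← himage]
  exact hDc.image hΦ

lemma aux_integrable_dirac {g : ℝ → ℝ} (hg : Measurable g) (a : ℝ) :
    Integrable g (Measure.dirac a) := by
  constructor
  · exact hg.aestronglyMeasurable
  · rw [HasFiniteIntegral, lintegral_dirac]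
    exact ENNReal.coe_lt_top

lemma aux_integral_sum_dirac {ι : Type} [Fintype ι] (w : ι → ℝ) (hw : ∀ i, 0 ≤ w i)
    (x : ι → ℝ) (g : ℝ → ℝ) (hg : Measurable g) :
    ∫ s, g s ∂(∑ i, (ENNReal.ofReal (w i)) • Measure.dirac (x i))
      = ∑ i, w i * g (x i) := by
  rw [integral_finset_sum_measure (fun i _ =>
    (aux_integrable_dirac hg (x i)).smul_measure ENNReal.ofReal_ne_top)]
  refine Finset.sum_congr rfl fun i _ => ?_
  rw [integral_smul_measure, integral_dirac, ENNReal.toReal_ofReal (hw i), smul_eq_mul]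

lemma aux_sum_dirac_prob {ι : Type} [Fintype ι] (w : ι → ℝ) (hw : ∀ i, 0 ≤ w i)
    (hsum : ∑ i, w i = 1) (x : ι → ℝ) :
    IsProbabilityMeasure (∑ i, (ENNReal.ofReal (w i)) • Measure.dirac (x i)) := by
  constructor
  simp only [Measure.coe_finset_sum, Finset.sum_apply, Measure.smul_apply, smul_eq_mul,
    measure_univ, mul_one]
  rw [← ENNReal.ofReal_sum_of_nonneg (fun i _ => hw i), hsum, ENNReal.ofReal_one]

lemma aux_sum_dirac_compl {ι : Type} [Fintype ι] (w : ι → ℝ)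
    (x : ι → ℝ) (hx : ∀ i, x i ∈ Set.Icc (0:ℝ) 1) :
    (∑ i, (ENNReal.ofReal (w i)) • Measure.dirac (x i)) ((Set.Icc (0 : ℝ) 1)ᶜ) = 0 := by
  simp only [Measure.coe_finset_sum, Finset.sum_apply, Measure.smul_apply, smul_eq_mul]
  refine Finset.sum_eq_zero fun i _ => ?_
  rw [Measure.dirac_apply]
  simp [Set.indicator_of_notMem, hx i]

end Aux

theorem exists_matching_priors_xalpha (α : ℝ) (hα0 : 0 < α) (hα1 : α < 1)
    (L : ℕ) (hL : 1 ≤ L) :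
    ∃ ν₀ ν₁ : Measure ℝ,
      IsProbabilityMeasure ν₀ ∧ IsProbabilityMeasure ν₁ ∧
      ν₀ ((Set.Icc (0 : ℝ) 1)ᶜ) = 0 ∧ ν₁ ((Set.Icc (0 : ℝ) 1)ᶜ) = 0 ∧
      (∀ l : ℕ, l ≤ L → (∫ t, t ^ l ∂ν₁) = ∫ t, t ^ l ∂ν₀) ∧
      (∫ t, t ^ α ∂ν₁) - (∫ t, t ^ α ∂ν₀)
        = 2 * approxErr (fun x => x ^ α) L 0 1 := by
  classical
  set f : ℝ → ℝ := fun x => x ^ α with hf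
  have hfc : Continuous f := Real.continuous_rpow_const hα0.le
  set E := approxErr f L 0 1 with hE
  haveI hne01 : Nonempty (Set.Icc (0:ℝ) 1) := ⟨⟨0, by norm_num⟩⟩
  haveI hnepoly : Nonempty {p : Polynomial ℝ // p.natDegree ≤ L} := ⟨⟨0, by simp⟩⟩
  have hbdd : ∀ p : Polynomial ℝ,
      BddAbove (Set.range fun x : Set.Icc (0:ℝ) 1 => |f x - p.eval (x:ℝ)|) := fun p =>
    (isCompact_range (((hfc.comp continuous_subtype_val).sub
      (p.continuous.comp continuous_subtype_val)).abs)).bddAbove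
  have hEnonneg : 0 ≤ E := le_ciInf fun p => Real.iSup_nonneg fun x => abs_nonneg _
  have hE_le : ∀ p : Polynomial ℝ, p.natDegree ≤ L → ∀ C : ℝ,
      (∀ x : ℝ, x ∈ Set.Icc (0:ℝ) 1 → |f x - p.eval x| ≤ C) → E ≤ C := by
    intro p hp C hC
    have h1 : E ≤ ⨆ x : Set.Icc (0:ℝ) 1, |f x - p.eval (x:ℝ)| := by
      refine ciInf_le ?_ (⟨p, hp⟩ : {p : Polynomial ℝ // p.natDegree ≤ L})
      refine ⟨0, ?_⟩
      rintro y ⟨q, rfl⟩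
      exact Real.iSup_nonneg fun x => abs_nonneg _
    exact h1.trans (ciSup_le fun x => hC x x.2)
  -- Lemma A : oscillation of f plus any polynomial is at least 2E
  have hosc : ∀ μ : ℕ → ℝ, ∃ x ∈ Set.Icc (0:ℝ) 1, ∃ y ∈ Set.Icc (0:ℝ) 1,
      2 * E ≤ (f x + ∑ l ∈ Finset.range (L+1), μ l * x ^ l)
            - (f y + ∑ l ∈ Finset.range (L+1), μ l * y ^ l) := by
    intro μ
    set g : ℝ → ℝ := fun x => f x + ∑ l ∈ Finset.range (L+1), μ l * x ^ l with hg
    have hgc : Continuous g := by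
      rw [hg]
      refine hfc.add (continuous_finset_sum _ fun l _ => ?_)
      exact continuous_const.mul (continuous_pow l)
    obtain ⟨xM, hxM, hmax⟩ := isCompact_Icc.exists_isMaxOn
      (Set.nonempty_Icc.2 zero_le_one) hgc.continuousOn
    obtain ⟨xm, hxm, hmin⟩ := isCompact_Icc.exists_isMinOn
      (Set.nonempty_Icc.2 zero_le_one) hgc.continuousOn
    clear_value g
    refine ⟨xM, hxM, xm, hxm, ?_⟩
    set p : Polynomial ℝ := Polynomial.C ((g xM + g xm)/2)
      - ∑ l ∈ Finset.range (L+1), Polynomial.C (μ l) * Polynomial.X ^ l with hp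
    have hpdeg : p.natDegree ≤ L := by
      refine le_trans (Polynomial.natDegree_sub_le _ _) (max_le (by simp) ?_)
      refine Polynomial.natDegree_sum_le_of_forall_le _ _ fun l hl => ?_
      refine le_trans (Polynomial.natDegree_C_mul_le _ _) ?_
      rw [Polynomial.natDegree_X_pow]
      exact Nat.lt_succ_iff.mp (Finset.mem_range.mp hl)
    have hpeval : ∀ x : ℝ, p.eval x = (g xM + g xm)/2 - ∑ l ∈ Finset.range (L+1), μ l * x ^ l := by
      intro x
      simp [hp, Polynomial.eval_finset_sum]
    have hEb : E ≤ (g xM - g xm)/2 := by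
      refine hE_le p hpdeg _ fun x hx => ?_
      have h1 : g x ≤ g xM := hmax hx
      have h2 : g xm ≤ g x := hmin hx
      have : f x - p.eval x = g x - (g xM + g xm)/2 := by
        rw [hpeval x, hg]; ring
      rw [this, abs_le]
      constructor <;> [linarith; linarith]
    have : 2 * E ≤ g xM - g xm := by linarith
    simpa [hg] using this
  -- The compact convex set K and the closed convex set B
  set φ : ℝ × ℝ → (Fin (L+2) → ℝ) := fun q i =>
    if (i : ℕ) = L + 1 then f q.1 - f q.2 else q.1 ^ (i : ℕ) - q.2 ^ (i : ℕ) with hφ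
  have hφc : Continuous φ := by
    refine continuous_pi fun i => ?_
    by_cases h : (i : ℕ) = L + 1
    · simp only [hφ, if_pos h]
      exact (hfc.comp continuous_fst).sub (hfc.comp continuous_snd)
    · simp only [hφ, if_neg h]
      exact (continuous_fst.pow _).sub (continuous_snd.pow _)
  set S : Set (Fin (L+2) → ℝ) := φ '' (Set.Icc 0 1 ×ˢ Set.Icc 0 1) with hS
  have hφdiag : ∀ x : ℝ, φ (x, x) = 0 := by
    intro x; funext i; by_cases h : (i : ℕ) = L + 1 <;> simp [hφ, h]
  have hSc : IsCompact S := (isCompact_Icc.prod isCompact_Icc).image hφc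
  have hSne : S.Nonempty :=
    ⟨φ (0,0), ⟨(0,0), ⟨Set.left_mem_Icc.2 zero_le_one, Set.left_mem_Icc.2 zero_le_one⟩, rfl⟩⟩
  set K := convexHull ℝ S with hK
  have hKc : IsCompact K := aux_isCompact_convexHull hSc hSne
  have hKconv : Convex ℝ K := convex_convexHull ℝ S
  have h0K : (0 : Fin (L+2) → ℝ) ∈ K := by
    rw [← hφdiag 0]
    exact subset_convexHull ℝ S
      ⟨(0,0), ⟨Set.left_mem_Icc.2 zero_le_one, Set.left_mem_Icc.2 zero_le_one⟩, rfl⟩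
  have hmemK : ∀ x ∈ Set.Icc (0:ℝ) 1, ∀ y ∈ Set.Icc (0:ℝ) 1, φ (x, y) ∈ K := by
    intro x hx y hy
    exact subset_convexHull ℝ S ⟨(x, y), ⟨hx, hy⟩, rfl⟩
  set B : Set (Fin (L+2) → ℝ) :=
    {z | (∀ i : Fin (L+2), (i : ℕ) ≤ L → z i = 0) ∧ 2 * E ≤ z (Fin.last (L+1))} with hB
  have hBconv : Convex ℝ B := by
    rintro z₁ ⟨h₁, h₁'⟩ z₂ ⟨h₂, h₂'⟩ a b ha hb hab
    constructor
    · intro i hi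
      simp [h₁ i hi, h₂ i hi]
    · have : (a • z₁ + b • z₂) (Fin.last (L+1)) = a * z₁ (Fin.last (L+1)) + b * z₂ (Fin.last (L+1)) := by
        simp
      rw [this]
      nlinarith
  have hBclosed : IsClosed B := by
    have : B = (⋂ i : Fin (L+2), {z : Fin (L+2) → ℝ | (i : ℕ) ≤ L → z i = 0})
        ∩ {z | 2 * E ≤ z (Fin.last (L+1))} := by
      ext z
      simp [hB, Set.mem_iInter]
    rw [this]
    refine IsClosed.inter (isClosed_iInter fun i => ?_)
      (isClosed_le continuous_const (continuous_apply _))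
    by_cases h : (i : ℕ) ≤ L
    · simp only [h, forall_true_left]
      exact isClosed_eq (continuous_apply i) continuous_const
    · have huniv : {z : Fin (L+2) → ℝ | (i : ℕ) ≤ L → z i = 0} = Set.univ := by
        ext z; simp [h]
      rw [huniv]; exact isClosed_univ
  -- Separation argument : K ∩ B is nonempty
  have hKB : ∃ z, z ∈ K ∧ z ∈ B := by
    by_contra hno
    push_neg at hno
    have hdisj : Disjoint K B := Set.disjoint_left.2 fun z hzK hzB => hno z hzK hzB
    obtain ⟨F, u, v, hFu, huv, hvF⟩ :=
      geometric_hahn_banach_compact_closed hKconv hKc hBconv hBclosed hdisj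
    set c := F ((Pi.single (Fin.last (L+1)) (1:ℝ) : Fin (L+2) → ℝ)) with hc
    have hmemB : (2 * E) • (Pi.single (Fin.last (L+1)) (1:ℝ) : Fin (L+2) → ℝ) ∈ B := by
      constructor
      · intro i hi
        have hne : i ≠ Fin.last (L+1) := by
          intro hEq
          rw [hEq, Fin.val_last] at hi
          omega
        simp [Pi.single_eq_of_ne hne]
      · simp
    have hvc : v < 2 * E * c := by
      have := hvF _ hmemB
      rwa [_root_.map_smul, smul_eq_mul] at this
    have hu0 : 0 < u := by
      have := hFu 0 h0K
      rwa [map_zero] at this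
    have hcpos : 0 < c := by
      by_contra hcle
      push_neg at hcle
      have : 2 * E * c ≤ 0 := mul_nonpos_of_nonneg_of_nonpos (by linarith) hcle
      linarith
    set μ : ℕ → ℝ := fun l =>
      if h : l < L + 1 then F ((Pi.single (⟨l, by omega⟩ : Fin (L+2)) (1:ℝ) : Fin (L+2) → ℝ)) / c else 0 with hμ
    have hkey : ∀ x y : ℝ, F (φ (x, y))
        = c * ((f x + ∑ l ∈ Finset.range (L+1), μ l * x ^ l)
             - (f y + ∑ l ∈ Finset.range (L+1), μ l * y ^ l)) := by
      intro x y
      have hrepr : φ (x, y) = ∑ i : Fin (L+2), φ (x, y) i • (Pi.single i (1:ℝ) : Fin (L+2) → ℝ) := by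
        funext j
        rw [Finset.sum_apply]
        simp only [Pi.smul_apply, Pi.single_apply, smul_eq_mul, mul_ite, mul_one, mul_zero]
        rw [Finset.sum_ite_eq Finset.univ j (fun i => φ (x, y) i)]
        simp
      have hexp : F (φ (x, y)) = ∑ i : Fin (L+2), φ (x, y) i * F ((Pi.single i (1:ℝ) : Fin (L+2) → ℝ)) := by
        conv_lhs => rw [hrepr]
        rw [map_sum]
        simp [smul_eq_mul]
      rw [hexp, Fin.sum_univ_castSucc]
      have hlast : φ (x, y) (Fin.last (L+1)) = f x - f y := by
        simp [hφ, Fin.val_last]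
      have hcast : ∀ j : Fin (L+1), φ (x, y) j.castSucc = x ^ (j:ℕ) - y ^ (j:ℕ) := by
        intro j
        have hjne : (j : ℕ) ≠ L + 1 := by
          have := j.isLt
          omega
        simp [hφ, Fin.coe_castSucc, hjne]
      have hFcast : ∀ j : Fin (L+1), F ((Pi.single j.castSucc (1:ℝ) : Fin (L+2) → ℝ)) = c * μ (j:ℕ) := by
        intro j
        have hj : (j:ℕ) < L + 1 := j.isLt
        have hidx : (⟨(j:ℕ), by omega⟩ : Fin (L+2)) = j.castSucc := by
          apply Fin.ext
          simp
        rw [hμ]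
        simp only [hj, dif_pos, hidx]
        field_simp
      have hsum1 : ∑ l ∈ Finset.range (L+1), μ l * x ^ l
          = ∑ j : Fin (L+1), μ (j:ℕ) * x ^ (j:ℕ) :=
        (Fin.sum_univ_eq_sum_range (fun l => μ l * x ^ l) (L+1)).symm
      have hsum2 : ∑ l ∈ Finset.range (L+1), μ l * y ^ l
          = ∑ j : Fin (L+1), μ (j:ℕ) * y ^ (j:ℕ) :=
        (Fin.sum_univ_eq_sum_range (fun l => μ l * y ^ l) (L+1)).symm
      rw [hsum1, hsum2, hlast]
      have : ∑ j : Fin (L+1), φ (x, y) j.castSucc * F ((Pi.single j.castSucc (1:ℝ) : Fin (L+2) → ℝ))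
          = ∑ j : Fin (L+1), c * (μ (j:ℕ) * x ^ (j:ℕ) - μ (j:ℕ) * y ^ (j:ℕ)) := by
        refine Finset.sum_congr rfl fun j _ => ?_
        rw [hcast j, hFcast j]
        ring
      rw [this, ← Finset.mul_sum, Finset.sum_sub_distrib]
      rw [hc]
      ring
    obtain ⟨x, hx, y, hy, h2E⟩ := hosc μ
    have hlt : F (φ (x, y)) < u := hFu _ (hmemK x hx y hy)
    rw [hkey x y] at hlt
    have : c * (2 * E) ≤ c * ((f x + ∑ l ∈ Finset.range (L+1), μ l * x ^ l)
        - (f y + ∑ l ∈ Finset.range (L+1), μ l * y ^ l)) :=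
      mul_le_mul_of_nonneg_left h2E hcpos.le
    nlinarith
  -- Extract a finite convex combination from K ∩ B
  obtain ⟨zs, hzK, hzB⟩ := hKB
  rw [hK, convexHull_eq] at hzK
  obtain ⟨ι, t, w, zf, hw0, hw1, hzS, hcm⟩ := hzK
  rw [Finset.centerMass_eq_of_sum_1 _ _ hw1] at hcm
  have hzS' : ∀ i : {i // i ∈ t}, ∃ qq : ℝ × ℝ,
      (qq.1 ∈ Set.Icc (0:ℝ) 1 ∧ qq.2 ∈ Set.Icc (0:ℝ) 1) ∧ φ qq = zf i := by
    intro i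
    obtain ⟨qq, hqq, hqq2⟩ := hzS i i.2
    exact ⟨qq, ⟨hqq.1, hqq.2⟩, hqq2⟩
  choose q hq hφq using hzS'
  set X : {i // i ∈ t} → ℝ := fun i => (q i).1 with hX
  set Y : {i // i ∈ t} → ℝ := fun i => (q i).2 with hY
  have hXmem : ∀ i, X i ∈ Set.Icc (0:ℝ) 1 := fun i => (hq i).1
  have hYmem : ∀ i, Y i ∈ Set.Icc (0:ℝ) 1 := fun i => (hq i).2
  have hw0' : ∀ i : {i // i ∈ t}, 0 ≤ w i := fun i => hw0 i i.2
  have hsum1 : ∑ i : {i // i ∈ t}, w i = 1 := by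
    rw [Finset.sum_coe_sort t w]; exact hw1
  have hcoord : ∀ jj : Fin (L+2), ∑ i : {i // i ∈ t}, w i * φ (q i) jj = zs jj := by
    intro jj
    have h1 : ∑ i : {i // i ∈ t}, w i • zf (i : ι) = zs := by
      rw [Finset.sum_coe_sort t (fun i => w i • zf i)]; exact hcm
    calc ∑ i : {i // i ∈ t}, w i * φ (q i) jj
        = ∑ i : {i // i ∈ t}, (w i • zf (i:ι)) jj := by
          refine Finset.sum_congr rfl fun i _ => ?_
          rw [hφq i]
          simp
      _ = (∑ i : {i // i ∈ t}, w i • zf (i:ι)) jj := by rw [Finset.sum_apply]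
      _ = zs jj := by rw [h1]
  have hmom : ∀ l : ℕ, l ≤ L → ∑ i : {i // i ∈ t}, w i * (X i ^ l - Y i ^ l) = 0 := by
    intro l hlL
    have hz : zs (⟨l, by omega⟩ : Fin (L+2)) = 0 := hzB.1 _ (by simpa using hlL)
    rw [← hz, ← hcoord ⟨l, by omega⟩]
    refine Finset.sum_congr rfl fun i _ => ?_
    have hne : (((⟨l, by omega⟩ : Fin (L+2))) : ℕ) ≠ L + 1 := by
      simp only [Fin.val_mk]; omega
    simp [hφ, hne, hX, hY]
  have hαcoord : ∑ i : {i // i ∈ t}, w i * (f (X i) - f (Y i)) = zs (Fin.last (L+1)) := by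
    rw [← hcoord (Fin.last (L+1))]
    refine Finset.sum_congr rfl fun i _ => ?_
    simp [hφ, Fin.val_last, hX, hY]
  -- the measures
  set ν₀ : Measure ℝ := ∑ i : {i // i ∈ t}, (ENNReal.ofReal (w i)) • Measure.dirac (Y i) with hν₀
  set ν₁ : Measure ℝ := ∑ i : {i // i ∈ t}, (ENNReal.ofReal (w i)) • Measure.dirac (X i) with hν₁
  -- upper bound (easy direction of duality)
  have hub : ∀ p : {p : Polynomial ℝ // p.natDegree ≤ L},
      ∑ i : {i // i ∈ t}, w i * (f (X i) - f (Y i))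
        ≤ 2 * ⨆ x : Set.Icc (0:ℝ) 1, |f x - (p : Polynomial ℝ).eval (x:ℝ)| := by
    rintro ⟨p, hp⟩
    set M := ⨆ x : Set.Icc (0:ℝ) 1, |f x - p.eval (x:ℝ)| with hM
    have hMb : ∀ x : ℝ, x ∈ Set.Icc (0:ℝ) 1 → |f x - p.eval x| ≤ M := fun x hx =>
      le_ciSup (hbdd p) (⟨x, hx⟩ : Set.Icc (0:ℝ) 1)
    have he : ∀ s : ℝ, p.eval s = ∑ l ∈ Finset.range (L+1), p.coeff l * s ^ l := fun s =>
      Polynomial.eval_eq_sum_range' (Nat.lt_succ_of_le hp) s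
    have hpzero : ∑ i : {i // i ∈ t}, w i * (p.eval (X i) - p.eval (Y i)) = 0 := by
      calc ∑ i : {i // i ∈ t}, w i * (p.eval (X i) - p.eval (Y i))
          = ∑ i : {i // i ∈ t}, ∑ l ∈ Finset.range (L+1),
              p.coeff l * (w i * (X i ^ l - Y i ^ l)) := by
            refine Finset.sum_congr rfl fun i _ => ?_
            rw [he (X i), he (Y i), ← Finset.sum_sub_distrib, Finset.mul_sum]
            refine Finset.sum_congr rfl fun l _ => by ring
        _ = ∑ l ∈ Finset.range (L+1), ∑ i : {i // i ∈ t},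
              p.coeff l * (w i * (X i ^ l - Y i ^ l)) := Finset.sum_comm
        _ = 0 := by
            refine Finset.sum_eq_zero fun l hl => ?_
            have hlL : l ≤ L := Nat.lt_succ_iff.mp (Finset.mem_range.mp hl)
            rw [← Finset.mul_sum, hmom l hlL, mul_zero]
    have hrw : ∑ i : {i // i ∈ t}, w i * (f (X i) - f (Y i))
        = ∑ i : {i // i ∈ t}, w i * ((f (X i) - p.eval (X i)) - (f (Y i) - p.eval (Y i))) := by
      rw [← sub_zero (∑ i : {i // i ∈ t}, w i * (f (X i) - f (Y i))), ← hpzero,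
        ← Finset.sum_sub_distrib]
      refine Finset.sum_congr rfl fun i _ => by ring
    rw [hrw]
    calc ∑ i : {i // i ∈ t}, w i * ((f (X i) - p.eval (X i)) - (f (Y i) - p.eval (Y i)))
        ≤ ∑ i : {i // i ∈ t}, w i * (2 * M) := by
          refine Finset.sum_le_sum fun i _ => mul_le_mul_of_nonneg_left ?_ (hw0' i)
          have h1 := abs_le.1 (hMb (X i) (hXmem i))
          have h2 := abs_le.1 (hMb (Y i) (hYmem i))
          linarith [h1.1, h1.2, h2.1, h2.2]
      _ = 2 * M := by rw [← Finset.sum_mul, hsum1, one_mul]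
  have hge : 2 * E ≤ ∑ i : {i // i ∈ t}, w i * (f (X i) - f (Y i)) := by
    rw [hαcoord]; exact hzB.2
  have hle : ∑ i : {i // i ∈ t}, w i * (f (X i) - f (Y i)) ≤ 2 * E := by
    have h2 : (∑ i : {i // i ∈ t}, w i * (f (X i) - f (Y i))) / 2 ≤ E := by
      refine le_ciInf fun p => ?_
      have := hub p
      linarith
    linarith
  have hdeq : ∑ i : {i // i ∈ t}, w i * (f (X i) - f (Y i)) = 2 * E := le_antisymm hle hge
  refine ⟨ν₀, ν₁, aux_sum_dirac_prob _ hw0' hsum1 _, aux_sum_dirac_prob _ hw0' hsum1 _,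
    aux_sum_dirac_compl _ _ hYmem, aux_sum_dirac_compl _ _ hXmem, ?_, ?_⟩
  · intro l hlL
    have hm : Measurable fun s : ℝ => s ^ l := measurable_id.pow_const l
    rw [hν₀, hν₁, aux_integral_sum_dirac (fun i : {i // i ∈ t} => w i) hw0' X _ hm,
      aux_integral_sum_dirac (fun i : {i // i ∈ t} => w i) hw0' Y _ hm]
    have := hmom l hlL
    rw [← sub_eq_zero, ← Finset.sum_sub_distrib]
    rw [← this]
    refine Finset.sum_congr rfl fun i _ => by ring
  · have hm : Measurable f := hfc.measurable
    have e1 : (∫ s, s ^ α ∂ν₁) = ∑ i : {i // i ∈ t}, w i * f (X i) := by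
      rw [hν₁]; exact aux_integral_sum_dirac (fun i : {i // i ∈ t} => w i) hw0' X f hm
    have e0 : (∫ s, s ^ α ∂ν₀) = ∑ i : {i // i ∈ t}, w i * f (Y i) := by
      rw [hν₀]; exact aux_integral_sum_dirac (fun i : {i // i ∈ t} => w i) hw0' Y f hm
    rw [e1, e0]
    rw [← hdeq, ← Finset.sum_sub_distrib]
    refine Finset.sum_congr rfl fun i _ => by ring
end

section
/- For every α ∈ (1, 3/2), every η ∈ (0, 1), and every integer L ≥ 1 there exist Borel probability measures ν₀ and ν₁ supported on the interval [η, 1] such that (i) ∫ t^l dν₁(t) = ∫ t^l dν₀(t) for every integer l with 0 ≤ l ≤ L, and (ii) ∫ t^{α−1} dν₁(t) − ∫ t^{α−1} dν₀(t) = 2·E_L[x^{α−1}]_{[η,1]}. -/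
open scoped BigOperators

open MeasureTheory

open Set Finset
open scoped ENNReal

section Aux

theorem mysum_pad {M : Type*} [AddCommMonoid M] {m n : ℕ} (hcard : m ≤ n) (F : ℕ → M)
    (hF : ∀ j, m ≤ j → F j = 0) :
    (∑ j : Fin n, F (j : ℕ)) = ∑ k : Fin m, F (k : ℕ) := by
  rw [Fin.sum_univ_eq_sum_range, Fin.sum_univ_eq_sum_range]
  refine (Finset.sum_subset (Finset.range_subset_range.mpr hcard) ?_).symm
  intro j _ hj
  exact hF j (by simpa using hj)

theorem myIsCompact_convexHull {V : Type*} [NormedAddCommGroup V] [NormedSpace ℝ V]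
    [FiniteDimensional ℝ V] {s : Set V} (hs : IsCompact s) (hne : s.Nonempty) :
    IsCompact (convexHull ℝ s) := by
  classical
  set n := Module.finrank ℝ V + 1 with hn
  obtain ⟨x₀, hx₀⟩ := hne
  set D : Set ((Fin n → ℝ) × (Fin n → V)) :=
    (stdSimplex ℝ (Fin n)) ×ˢ (Set.univ.pi fun _ => s) with hD
  have hDcompact : IsCompact D :=
    (isCompact_stdSimplex _ _).prod (isCompact_univ_pi fun _ => hs)
  set g : (Fin n → ℝ) × (Fin n → V) → V := fun p => ∑ i : Fin n, p.1 i • p.2 i with hg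
  have hgcont : Continuous g := by
    apply continuous_finset_sum
    intro i _
    exact ((continuous_apply i).comp continuous_fst).smul
      ((continuous_apply i).comp continuous_snd)
  have himage : g '' D = convexHull ℝ s := by
    apply Set.Subset.antisymm
    · rintro x ⟨⟨w, z⟩, ⟨hw, hz⟩, rfl⟩
      have hw1 : ∑ i : Fin n, w i = 1 := hw.2
      show (∑ i : Fin n, w i • z i) ∈ convexHull ℝ s
      rw [← Finset.centerMass_eq_of_sum_1 _ _ hw1]
      exact Finset.centerMass_mem_convexHull _ (fun i _ => hw.1 i) (by rw [hw1]; norm_num)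
        (fun i _ => hz i (Set.mem_univ i))
    · intro x hx
      obtain ⟨ι, hfin, z, w, hzs, hai, hw0, hw1, hwz⟩ :=
        eq_pos_convex_span_of_mem_convexHull hx
      set m := Fintype.card ι with hm
      have hcard : m ≤ n := by
        rcases isEmpty_or_nonempty ι with h | h
        · simp [hm, hn]
        · have := hai.finrank_vectorSpan_add_one
          have h2 : Module.finrank ℝ (vectorSpan ℝ (Set.range z)) ≤ Module.finrank ℝ V :=
            Submodule.finrank_le _
          omega
      obtain ⟨e⟩ : Nonempty (ι ≃ Fin m) := ⟨(Fintype.truncEquivFin ι).out⟩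
      set W : ℕ → ℝ := fun j => if h : j < m then w (e.symm ⟨j, h⟩) else 0 with hW
      set Z : ℕ → V := fun j => if h : j < m then z (e.symm ⟨j, h⟩) else x₀ with hZ
      refine ⟨(fun j : Fin n => W j, fun j : Fin n => Z j), ⟨⟨?_, ?_⟩, ?_⟩, ?_⟩
      · intro j
        by_cases h : (j : ℕ) < m
        · simp only [hW]
          rw [dif_pos h]
          exact (hw0 _).le
        · simp only [hW]
          rw [dif_neg h]
      · have := mysum_pad hcard W (fun j hj => by simp [hW, Nat.not_lt.mpr hj])
        rw [this]
        have : ∑ k : Fin m, W (k : ℕ) = ∑ k : Fin m, w (e.symm k) := by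
          apply Finset.sum_congr rfl
          intro k _
          simp [hW, k.isLt]
        rw [this]
        rw [Equiv.sum_comp e.symm w]
        exact hw1
      · intro j _
        by_cases h : (j : ℕ) < m
        · simp only [hZ]
          rw [dif_pos h]
          exact hzs (Set.mem_range_self _)
        · simp only [hZ]
          rw [dif_neg h]
          exact hx₀
      · show (∑ j : Fin n, W (j : ℕ) • Z (j : ℕ)) = x
        have hzero : ∀ j, m ≤ j → W j • Z j = 0 := by
          intro j hj
          simp [hW, Nat.not_lt.mpr hj]
        have h1 : (∑ j : Fin n, W (j : ℕ) • Z (j : ℕ))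
            = ∑ k : Fin m, W (k : ℕ) • Z (k : ℕ) :=
          mysum_pad hcard (fun j => W j • Z j) hzero
        rw [h1]
        have h2 : ∑ k : Fin m, W (k : ℕ) • Z (k : ℕ)
            = ∑ k : Fin m, w (e.symm k) • z (e.symm k) := by
          apply Finset.sum_congr rfl
          intro k _
          simp [hW, hZ, k.isLt]
        rw [h2, Equiv.sum_comp e.symm (fun i => w i • z i)]
        exact hwz
  rw [← himage]
  exact hDcompact.image hgcont


theorem myintegral_comb {ι : Type} (T : Finset ι) (c : ι → ℝ) (hc : ∀ i ∈ T, 0 ≤ c i)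
    (pt : ι → ℝ) (g : ℝ → ℝ) :
    (∫ x, g x ∂(∑ i ∈ T, ENNReal.ofReal (c i) • Measure.dirac (pt i)))
      = ∑ i ∈ T, c i * g (pt i) := by
  rw [integral_finset_sum_measure (fun i _ =>
    ((integrable_const (g (pt i))).congr (ae_eq_dirac g).symm).smul_measure
      ENNReal.ofReal_ne_top)]
  apply Finset.sum_congr rfl
  intro i hi
  rw [integral_smul_measure, integral_dirac, ENNReal.toReal_ofReal (hc i hi), smul_eq_mul]

theorem mymeas_apply {ι : Type} (T : Finset ι) (c : ι → ℝ) (pt : ι → ℝ) {A : Set ℝ}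
    (hA : MeasurableSet A) :
    (∑ i ∈ T, ENNReal.ofReal (c i) • Measure.dirac (pt i)) A
      = ∑ i ∈ T, ENNReal.ofReal (c i) * (A.indicator (fun _ => (1:ℝ≥0∞)) (pt i)) := by
  rw [Measure.finset_sum_apply]
  apply Finset.sum_congr rfl
  intro i _
  rw [Measure.smul_apply, Measure.dirac_apply' _ hA, smul_eq_mul]
  rfl


theorem dual_mem (α η : ℝ) (hα1 : 1 < α) (hη0 : 0 < η) (hη1 : η < 1) (L : ℕ) :
    ∃ (ι : Type) (T : Finset ι) (w : ι → ℝ) (pt : ι → ℝ) (sg : ι → ℝ),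
      (∀ i ∈ T, 0 ≤ w i) ∧ (∑ i ∈ T, w i) = 1 ∧ (∀ i ∈ T, pt i ∈ Set.Icc η 1) ∧
      (∀ i ∈ T, sg i = 1 ∨ sg i = -1) ∧
      (∀ l : ℕ, l ≤ L → (∑ i ∈ T, w i * sg i * pt i ^ l) = 0) ∧
      (∑ i ∈ T, w i * sg i * pt i ^ (α - 1))
        = approxErr (fun x => x ^ (α - 1)) L η 1 := by
  classical
  haveI : Nonempty {p : Polynomial ℝ // p.natDegree ≤ L} := ⟨⟨0, by simp⟩⟩
  set K : Set ℝ := Set.Icc η 1 with hK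
  have hηK : η ∈ K := ⟨le_refl η, hη1.le⟩
  haveI hKne : Nonempty K := ⟨⟨η, hηK⟩⟩
  set f : ℝ → ℝ := fun x => x ^ (α - 1) with hf
  set E := approxErr f L η 1 with hE
  set F : ℝ → (Fin (L + 1) → ℝ) × ℝ := fun t => (fun l => t ^ (l : ℕ), f t) with hF
  set S : Set ((Fin (L + 1) → ℝ) × ℝ) := F '' K ∪ Neg.neg '' (F '' K) with hS
  -- basic facts about approxErr
  have hbdd : BddBelow (Set.range fun p : {p : Polynomial ℝ // p.natDegree ≤ L} =>
      ⨆ x : K, |f (x : ℝ) - (p : Polynomial ℝ).eval (x : ℝ)|) := by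
    refine ⟨0, ?_⟩
    rintro y ⟨q, rfl⟩
    exact Real.iSup_nonneg fun x => abs_nonneg _
  have hEle : ∀ p : Polynomial ℝ, p.natDegree ≤ L →
      E ≤ ⨆ x : K, |f (x : ℝ) - p.eval (x : ℝ)| := by
    intro p hp
    exact ciInf_le hbdd ⟨p, hp⟩
  have hE0 : 0 ≤ E := le_ciInf fun q => Real.iSup_nonneg fun x => abs_nonneg _
  -- compactness of the convex hull
  have hFcont : ContinuousOn F K := by
    apply ContinuousOn.prodMk
    · exact continuousOn_pi.mpr fun l => (continuous_pow (l : ℕ)).continuousOn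
    · exact ContinuousOn.rpow_const continuousOn_id fun x _ => Or.inr (by linarith)
  have hKcomp : IsCompact K := isCompact_Icc
  have hFK : IsCompact (F '' K) := hKcomp.image_of_continuousOn hFcont
  have hScomp : IsCompact S := hFK.union (hFK.image continuous_neg)
  have hSne : S.Nonempty := ⟨F η, Or.inl ⟨η, hηK, rfl⟩⟩
  have hCcomp : IsCompact (convexHull ℝ S) := myIsCompact_convexHull hScomp hSne
  -- the key membership
  have hmem : ((0 : Fin (L + 1) → ℝ), E) ∈ convexHull ℝ S := by
    by_contra hnot
    obtain ⟨g, c, hlt, hgt⟩ := geometric_hahn_banach_closed_point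
      (convex_convexHull ℝ S) hCcomp.isClosed hnot
    have h0mem : (0 : (Fin (L + 1) → ℝ) × ℝ) ∈ convexHull ℝ S := by
      have h1 : F η ∈ convexHull ℝ S := subset_convexHull ℝ S (Or.inl ⟨η, hηK, rfl⟩)
      have h2 : -F η ∈ convexHull ℝ S := subset_convexHull ℝ S (Or.inr ⟨F η, ⟨η, hηK, rfl⟩, rfl⟩)
      have := (convex_convexHull ℝ S) h1 h2 (by norm_num : (0:ℝ) ≤ 1/2)
        (by norm_num : (0:ℝ) ≤ 1/2) (by norm_num)
      simpa using this
    have hc0 : 0 < c := by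
      have := hlt 0 h0mem
      rwa [map_zero] at this
    set b := g ((0 : Fin (L + 1) → ℝ), 1) with hb
    have hgy : g ((0 : Fin (L + 1) → ℝ), E) = E * b := by
      have : ((0 : Fin (L + 1) → ℝ), E) = E • ((0 : Fin (L + 1) → ℝ), (1:ℝ)) := by
        simp [Prod.smul_def]
      rw [this, _root_.map_smul, smul_eq_mul]
    have hbE : c < E * b := by rw [← hgy]; exact hgt
    have hEpos : 0 < E := by
      rcases hE0.lt_or_eq with h | h
      · exact h
      · exfalso; rw [← h] at hbE; simp at hbE; linarith
    have hbpos : 0 < b := by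
      by_contra hb'
      push_neg at hb'
      have : E * b ≤ 0 := mul_nonpos_of_nonneg_of_nonpos hEpos.le hb'
      linarith
    set a : Fin (L + 1) → ℝ := fun l => g (Pi.single l 1, 0) with ha
    have hgF : ∀ t : ℝ, g (F t) = (∑ l : Fin (L + 1), t ^ (l : ℕ) * a l) + f t * b := by
      intro t
      have hdecomp : F t = (∑ l : Fin (L + 1), (t ^ (l : ℕ)) • ((Pi.single l 1 : Fin (L+1) → ℝ), (0:ℝ)))
          + (f t) • ((0 : Fin (L + 1) → ℝ), (1:ℝ)) := by
        apply Prod.ext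
        · simp only [Prod.fst_add, Prod.fst_sum, Prod.smul_fst, Prod.smul_snd]
          funext l'
          simp [hF, Finset.sum_apply, Pi.single_apply]
        · simp [hF, Prod.snd_add, Prod.snd_sum]
      rw [hdecomp, map_add, map_sum, _root_.map_smul, smul_eq_mul]
      congr 1
      apply Finset.sum_congr rfl
      intro l _
      rw [_root_.map_smul, smul_eq_mul]
    set p : Polynomial ℝ := ∑ l : Fin (L + 1), Polynomial.C (-(a l) / b) * Polynomial.X ^ (l : ℕ)
      with hp
    have hpdeg : p.natDegree ≤ L := by
      apply Polynomial.natDegree_sum_le_of_forall_le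
      intro l _
      exact le_trans (Polynomial.natDegree_C_mul_X_pow_le _ _) (Nat.lt_succ_iff.mp l.isLt)
    have hpe : ∀ t : ℝ, p.eval t = ∑ l : Fin (L + 1), (-(a l) / b) * t ^ (l : ℕ) := by
      intro t
      rw [hp, Polynomial.eval_finset_sum]
      simp
    have hptw : ∀ t, t ∈ K → |f t - p.eval t| ≤ c / b := by
      intro t ht
      have h1 : g (F t) < c := hlt _ (subset_convexHull ℝ S (Or.inl ⟨t, ht, rfl⟩))
      have h2 : g (-(F t)) < c := hlt _ (subset_convexHull ℝ S (Or.inr ⟨F t, ⟨t, ht, rfl⟩, rfl⟩))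
      rw [map_neg] at h2
      have habs : |g (F t)| ≤ c := (abs_lt.mpr ⟨by linarith, h1⟩).le
      have hid' : (f t - p.eval t) * b = g (F t) := by
        rw [hpe, hgF, sub_mul, Finset.sum_mul]
        have hterm : ∀ l ∈ Finset.univ, (-(a l) / b * t ^ (l : ℕ)) * b = -(t ^ (l : ℕ) * a l) :=
          fun l _ => by rw [div_mul_eq_mul_div, div_mul_cancel₀ _ hbpos.ne']; ring
        rw [Finset.sum_congr rfl hterm]
        rw [Finset.sum_neg_distrib]
        try ring
      have hid : f t - p.eval t = g (F t) / b := by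
        rw [eq_div_iff hbpos.ne']
        exact hid'
      rw [hid, abs_div, abs_of_pos hbpos]
      gcongr
    have hsup : (⨆ x : K, |f (x : ℝ) - p.eval (x : ℝ)|) ≤ c / b :=
      ciSup_le fun x => hptw x x.2
    have hlt2 : c / b < E := (div_lt_iff₀ hbpos).mpr (by linarith [hbE])
    have := hEle p hpdeg
    linarith
  -- extract a finite representation from the convex hull membership
  rw [_root_.convexHull_eq] at hmem
  obtain ⟨ι, T, wgt, zs, hw0, hw1, hzS, hcm⟩ := hmem
  have hsum : ∑ i ∈ T, wgt i • zs i = ((0 : Fin (L + 1) → ℝ), E) := by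
    rw [← Finset.centerMass_eq_of_sum_1 _ _ hw1]
    exact hcm
  have hex : ∀ i ∈ T, ∃ t e : ℝ, t ∈ K ∧ (e = 1 ∨ e = -1) ∧ zs i = e • F t := by
    intro i hi
    rcases hzS i hi with ⟨t, ht, hFt⟩ | ⟨y, ⟨t, ht, rfl⟩, hy⟩
    · exact ⟨t, 1, ht, Or.inl rfl, by rw [one_smul, hFt]⟩
    · exact ⟨t, -1, ht, Or.inr rfl, by rw [← hy]; simp⟩
  choose! pt sg hptK hsg hzeq using hex
  refine ⟨ι, T, wgt, pt, sg, hw0, hw1, hptK, hsg, ?_, ?_⟩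
  · intro l hl
    have hl' : l < L + 1 := Nat.lt_succ_of_le hl
    have hfst := congrArg Prod.fst hsum
    rw [Prod.fst_sum] at hfst
    have hfst' := congrFun hfst ⟨l, hl'⟩
    rw [Finset.sum_apply] at hfst'
    calc (∑ i ∈ T, wgt i * sg i * pt i ^ l)
        = ∑ i ∈ T, (wgt i • zs i).1 ⟨l, hl'⟩ := by
          apply Finset.sum_congr rfl
          intro i hi
          rw [hzeq i hi]
          simp only [Prod.smul_fst, Pi.smul_apply, smul_eq_mul, hF]
          ring
      _ = 0 := hfst'
  · have hsnd := congrArg Prod.snd hsum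
    rw [Prod.snd_sum] at hsnd
    calc (∑ i ∈ T, wgt i * sg i * pt i ^ (α - 1))
        = ∑ i ∈ T, (wgt i • zs i).2 := by
          apply Finset.sum_congr rfl
          intro i hi
          rw [hzeq i hi]
          simp only [Prod.smul_snd, smul_eq_mul, hF]
          ring
      _ = E := hsnd


end Aux

theorem exists_matching_priors_xalpha_shifted (α : ℝ) (hα1 : 1 < α) (hα2 : α < 3 / 2)
    (η : ℝ) (hη0 : 0 < η) (hη1 : η < 1) (L : ℕ) (hL : 1 ≤ L) :
    ∃ ν₀ ν₁ : Measure ℝ,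
      IsProbabilityMeasure ν₀ ∧ IsProbabilityMeasure ν₁ ∧
      ν₀ ((Set.Icc η 1)ᶜ) = 0 ∧ ν₁ ((Set.Icc η 1)ᶜ) = 0 ∧
      (∀ l : ℕ, l ≤ L → (∫ t, t ^ l ∂ν₁) = ∫ t, t ^ l ∂ν₀) ∧
      (∫ t, t ^ (α - 1) ∂ν₁) - (∫ t, t ^ (α - 1) ∂ν₀)
        = 2 * approxErr (fun x => x ^ (α - 1)) L η 1 := by
  classical
  obtain ⟨ι, T, w, pt, sg, hw0, hw1, hptK, hsg, hmom, hval⟩ := dual_mem α η hα1 hη0 hη1 L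
  set u : ι → ℝ := fun i => w i * sg i with hu
  set up : ι → ℝ := fun i => max (u i) 0 with hup
  set un : ι → ℝ := fun i => max (-u i) 0 with hun
  have hup0 : ∀ i, 0 ≤ up i := fun i => le_max_right _ _
  have hun0 : ∀ i, 0 ≤ un i := fun i => le_max_right _ _
  have hdiff : ∀ i, up i - un i = u i := by
    intro i
    rcases le_total 0 (u i) with h | h
    · rw [hup, hun]; dsimp only
      rw [max_eq_left h, max_eq_right (neg_nonpos.mpr h)]; ring
    · rw [hup, hun]; dsimp only
      rw [max_eq_right h, max_eq_left (neg_nonneg.mpr h)]; ring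
  have hadd : ∀ i ∈ T, up i + un i = w i := by
    intro i hi
    rcases hsg i hi with h | h
    · have hui : u i = w i := by rw [hu]; dsimp only; rw [h, mul_one]
      rw [hup, hun]; dsimp only
      rw [hui, max_eq_left (hw0 i hi), max_eq_right (neg_nonpos.mpr (hw0 i hi))]; ring
    · have hui : u i = -w i := by rw [hu]; dsimp only; rw [h]; ring
      rw [hup, hun]; dsimp only
      rw [hui, max_eq_right (neg_nonpos.mpr (hw0 i hi)), neg_neg,
        max_eq_left (hw0 i hi)]; ring
  have hzero : (∑ i ∈ T, u i) = 0 := by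
    have := hmom 0 (Nat.zero_le L)
    simpa [hu] using this
  have hsumup : (∑ i ∈ T, up i) = 1 / 2 ∧ (∑ i ∈ T, un i) = 1 / 2 := by
    have hA : (∑ i ∈ T, up i) + (∑ i ∈ T, un i) = 1 := by
      rw [← Finset.sum_add_distrib, Finset.sum_congr rfl hadd]
      exact hw1
    have hB : (∑ i ∈ T, up i) - (∑ i ∈ T, un i) = 0 := by
      rw [← Finset.sum_sub_distrib, Finset.sum_congr rfl (fun i _ => hdiff i)]
      exact hzero
    constructor <;> linarith
  set K : Set ℝ := Set.Icc η 1 with hK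
  have hKm : MeasurableSet Kᶜ := measurableSet_Icc.compl
  set ν₁ : Measure ℝ := ∑ i ∈ T, ENNReal.ofReal (2 * up i) • Measure.dirac (pt i) with hν₁
  set ν₀ : Measure ℝ := ∑ i ∈ T, ENNReal.ofReal (2 * un i) • Measure.dirac (pt i) with hν₀
  have hprob : ∀ (c : ι → ℝ), (∀ i, 0 ≤ c i) → (∑ i ∈ T, c i) = 1 / 2 →
      IsProbabilityMeasure (∑ i ∈ T, ENNReal.ofReal (2 * c i) • Measure.dirac (pt i)) := by
    intro c hc hcs
    constructor
    rw [mymeas_apply T _ pt MeasurableSet.univ]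
    have : ∀ i ∈ T, ENNReal.ofReal (2 * c i) * (Set.univ.indicator (fun _ => (1:ℝ≥0∞)) (pt i))
        = ENNReal.ofReal (2 * c i) := by
      intro i _
      rw [Set.indicator_of_mem (Set.mem_univ _), mul_one]
    rw [Finset.sum_congr rfl this, ← ENNReal.ofReal_sum_of_nonneg
      (fun i _ => mul_nonneg (by norm_num) (hc i))]
    rw [← Finset.mul_sum, hcs]
    norm_num
  have hnull : ∀ (c : ι → ℝ),
      (∑ i ∈ T, ENNReal.ofReal (2 * c i) • Measure.dirac (pt i)) Kᶜ = 0 := by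
    intro c
    rw [mymeas_apply T _ pt hKm]
    apply Finset.sum_eq_zero
    intro i hi
    rw [Set.indicator_of_notMem (by simpa using hptK i hi), mul_zero]
  have hint : ∀ (c : ι → ℝ), (∀ i, 0 ≤ c i) → ∀ g : ℝ → ℝ,
      (∫ x, g x ∂(∑ i ∈ T, ENNReal.ofReal (2 * c i) • Measure.dirac (pt i)))
        = ∑ i ∈ T, 2 * c i * g (pt i) :=
    fun c hc g => myintegral_comb T _ (fun i _ => mul_nonneg (by norm_num) (hc i)) pt g
  refine ⟨ν₀, ν₁, hprob un hun0 hsumup.2, hprob up hup0 hsumup.1, hnull un, hnull up, ?_, ?_⟩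
  · intro l hl
    rw [hν₀, hν₁, hint up hup0 (fun t => t ^ l), hint un hun0 (fun t => t ^ l)]
    have : (∑ i ∈ T, 2 * up i * pt i ^ l) - (∑ i ∈ T, 2 * un i * pt i ^ l) = 0 := by
      rw [← Finset.sum_sub_distrib]
      have hterm : ∀ i ∈ T, 2 * up i * pt i ^ l - 2 * un i * pt i ^ l
          = 2 * (w i * sg i * pt i ^ l) := by
        intro i hi
        have h2 := hdiff i
        rw [hu] at h2
        dsimp only at h2
        rw [← h2]
        ring
      rw [Finset.sum_congr rfl hterm, ← Finset.mul_sum, hmom l hl, mul_zero]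
    linarith
  · rw [hν₀, hν₁, hint up hup0 (fun t => t ^ (α - 1)), hint un hun0 (fun t => t ^ (α - 1))]
    have : (∑ i ∈ T, 2 * up i * pt i ^ (α - 1)) - (∑ i ∈ T, 2 * un i * pt i ^ (α - 1))
        = 2 * approxErr (fun x => x ^ (α - 1)) L η 1 := by
      rw [← Finset.sum_sub_distrib]
      have hterm : ∀ i ∈ T, 2 * up i * pt i ^ (α - 1) - 2 * un i * pt i ^ (α - 1)
          = 2 * (w i * sg i * pt i ^ (α - 1)) := by
        intro i hi
        have h2 := hdiff i
        rw [hu] at h2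
        dsimp only at h2
        rw [← h2]
        ring
      rw [Finset.sum_congr rfl hterm, ← Finset.mul_sum, hval]
    linarith
end

section
/- There exists an integer N₀ such that for every integer n ≥ N₀ the following holds: if μ₀ and μ₁ are any two Borel probability measures on the interval [0, (ln n)/n] satisfying ∫ p^l dμ₁(p) = ∫ p^l dμ₀(p) for every integer l with 0 ≤ l ≤ 10e·ln n, then the mixed-Poisson probability mass functions F_i(y) = ∫ e^{−np}·(np)^y / y! dμ_i(p) (for y ∈ ℕ and i = 0, 1) satisfy (1/2)·∑_{y=0}^∞ |F_1(y) − F_0(y)| ≤ n^{−6}; that is, the total variation distance between the two mixed-Poisson distributions on ℕ is at most n^{−6}. -/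
open scoped BigOperators ENNReal
open MeasureTheory

set_option maxHeartbeats 2000000

lemma aux_exp_tsum (x : ℝ) : Real.exp x = ∑' k : ℕ, x ^ k / (Nat.factorial k : ℝ) := by
  rw [Real.exp_eq_exp_ℝ, NormedSpace.exp_eq_tsum_div]

lemma aux_exp_tail (x : ℝ) (M : ℕ) :
    Real.exp x - ∑ k ∈ Finset.range M, x ^ k / (Nat.factorial k : ℝ)
      = ∑' j : ℕ, x ^ (j + M) / (Nat.factorial (j + M) : ℝ) := by
  have h := Summable.sum_add_tsum_nat_add (f := fun k : ℕ => x ^ k / (Nat.factorial k : ℝ)) M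
    (Real.summable_pow_div_factorial x)
  rw [aux_exp_tsum]
  linarith

lemma aux_choose_le_two_pow (m y : ℕ) : (m.choose y) ≤ 2 ^ m := by
  rcases le_or_gt y m with h | h
  · calc m.choose y ≤ ∑ i ∈ Finset.range (m+1), m.choose i :=
        Finset.single_le_sum (fun i _ => Nat.zero_le _) (Finset.mem_range.mpr (Nat.lt_succ_of_le h))
    _ = 2 ^ m := Nat.sum_range_choose m
  · rw [Nat.choose_eq_zero_of_lt h]; positivity

lemma aux_pow_le_exp_mul_factorial (m : ℕ) :
    (m : ℝ) ^ m ≤ Real.exp m * (Nat.factorial m : ℝ) := by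
  have hs := Real.summable_pow_div_factorial (m : ℝ)
  have h : (m : ℝ) ^ m / (Nat.factorial m : ℝ) ≤ Real.exp m := by
    rw [aux_exp_tsum]
    exact Summable.le_tsum hs m (fun j _ => by positivity)
  have hf : (0:ℝ) < (Nat.factorial m : ℝ) := by exact_mod_cast (Nat.factorial_pos m)
  calc (m:ℝ)^m = (m:ℝ)^m / (Nat.factorial m) * Nat.factorial m := by field_simp
  _ ≤ Real.exp m * Nat.factorial m := by exact mul_le_mul_of_nonneg_right h hf.le

lemma aux_term_bound {a : ℝ} (ha : 0 < a) (y k : ℕ)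
    (hm : 10 * Real.exp 1 * a ≤ ((y + k : ℕ) : ℝ)) :
    a ^ (y + k) / ((Nat.factorial y : ℝ) * (Nat.factorial k : ℝ)) ≤ (1/5 : ℝ) ^ (y + k) := by
  set m := y + k with hmdef
  have hE : (0:ℝ) < Real.exp 1 := Real.exp_pos 1
  have hm0 : (0:ℝ) < (m:ℝ) := lt_of_lt_of_le (by positivity) hm
  have hfy : (0:ℝ) < (Nat.factorial y : ℝ) := by exact_mod_cast Nat.factorial_pos y
  have hfk : (0:ℝ) < (Nat.factorial k : ℝ) := by exact_mod_cast Nat.factorial_pos k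
  have hfm : (0:ℝ) < (Nat.factorial m : ℝ) := by exact_mod_cast Nat.factorial_pos m
  have hchoose : ((m.choose k : ℕ) : ℝ) * (Nat.factorial y : ℝ) * (Nat.factorial k : ℝ)
      = (Nat.factorial m : ℝ) := by
    exact_mod_cast congrArg (Nat.cast : ℕ → ℝ) (Nat.add_choose_mul_factorial_mul_factorial y k)
  have step1 : a ^ m / ((Nat.factorial y : ℝ) * (Nat.factorial k : ℝ))
      = a ^ m * (m.choose k : ℝ) / (Nat.factorial m : ℝ) := by
    rw [div_eq_div_iff (by positivity) hfm.ne']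
    rw [← hchoose]; ring
  have hch2 : ((m.choose k : ℕ) : ℝ) ≤ 2 ^ m := by
    exact_mod_cast aux_choose_le_two_pow m k
  have step2 : a ^ m * (m.choose k : ℝ) / (Nat.factorial m : ℝ)
      ≤ (2*a) ^ m / (Nat.factorial m : ℝ) := by
    rw [div_le_div_iff₀ hfm hfm, mul_pow]
    have h1 : a ^ m * (m.choose k : ℝ) ≤ a ^ m * 2 ^ m :=
      mul_le_mul_of_nonneg_left hch2 (by positivity)
    have h2 : a ^ m * (m.choose k : ℝ) ≤ 2 ^ m * a ^ m := by linarith [h1, (by ring : a ^ m * (2:ℝ) ^ m = 2 ^ m * a ^ m)]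
    exact mul_le_mul_of_nonneg_right h2 hfm.le
  have hfl := aux_pow_le_exp_mul_factorial m
  have step3 : (2*a) ^ m / (Nat.factorial m : ℝ) ≤ (2 * Real.exp 1 * a / m) ^ m := by
    have hexp : Real.exp m = (Real.exp 1) ^ m := by
      rw [← Real.exp_nat_mul]; norm_num
    rw [div_pow, div_le_div_iff₀ hfm (by positivity)]
    calc (2*a)^m * (m:ℝ)^m ≤ (2*a)^m * (Real.exp m * Nat.factorial m) :=
      mul_le_mul_of_nonneg_left hfl (by positivity)
    _ = (2 * Real.exp 1 * a) ^ m * Nat.factorial m := by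
        rw [hexp, mul_pow, mul_pow, mul_pow]; ring
  have step4 : (2 * Real.exp 1 * a / m) ^ m ≤ (1/5 : ℝ) ^ m := by
    apply pow_le_pow_left₀ (by positivity)
    rw [div_le_div_iff₀ hm0 (by norm_num)]
    nlinarith
  calc a ^ m / ((Nat.factorial y : ℝ) * (Nat.factorial k : ℝ))
      = a ^ m * (m.choose k : ℝ) / (Nat.factorial m : ℝ) := step1
  _ ≤ (2*a) ^ m / (Nat.factorial m : ℝ) := step2
  _ ≤ (2 * Real.exp 1 * a / m) ^ m := step3
  _ ≤ (1/5 : ℝ) ^ m := step4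

lemma aux_pointwise {a c : ℝ} (hc0 : 0 ≤ c) (hca : c ≤ a) (y M : ℕ) :
    |Real.exp (-c) * c ^ y / (Nat.factorial y : ℝ)
      - ∑ k ∈ Finset.range M, (-c) ^ k * c ^ y / ((Nat.factorial y : ℝ) * (Nat.factorial k : ℝ))|
    ≤ ∑' j : ℕ, a ^ y * a ^ (j + M) / ((Nat.factorial y : ℝ) * (Nat.factorial (j + M) : ℝ)) := by
  have ha0 : 0 ≤ a := le_trans hc0 hca
  have hfy : (0:ℝ) < (Nat.factorial y : ℝ) := by exact_mod_cast Nat.factorial_pos y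
  have hsum_c : Summable (fun j : ℕ => c ^ (j + M) / (Nat.factorial (j+M) : ℝ)) :=
    (_root_.summable_nat_add_iff M).mpr (Real.summable_pow_div_factorial c)
  have hsum_a : Summable (fun j : ℕ => a ^ (j + M) / (Nat.factorial (j+M) : ℝ)) :=
    (_root_.summable_nat_add_iff M).mpr (Real.summable_pow_div_factorial a)
  have habs : ∀ j : ℕ, |(-c) ^ (j + M) / (Nat.factorial (j+M) : ℝ)|
      = c ^ (j + M) / (Nat.factorial (j+M) : ℝ) := by
    intro j
    have hf : (0:ℝ) < (Nat.factorial (j+M) : ℝ) := by exact_mod_cast Nat.factorial_pos (j+M)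
    rw [abs_div, abs_pow, abs_neg, abs_of_nonneg hc0, abs_of_nonneg hf.le]
  have hsum_n : Summable (fun j : ℕ => ‖(-c) ^ (j + M) / (Nat.factorial (j+M) : ℝ)‖) := by
    apply hsum_c.congr
    intro j
    rw [Real.norm_eq_abs, habs j]
  have hfactor : (Real.exp (-c) * c ^ y / (Nat.factorial y : ℝ)
      - ∑ k ∈ Finset.range M, (-c) ^ k * c ^ y / ((Nat.factorial y : ℝ) * (Nat.factorial k : ℝ)))
      = c ^ y / (Nat.factorial y : ℝ)
        * (Real.exp (-c) - ∑ k ∈ Finset.range M, (-c) ^ k / (Nat.factorial k : ℝ)) := by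
    rw [mul_sub, Finset.mul_sum]
    congr 1
    · ring
    · apply Finset.sum_congr rfl
      intro k _
      have hfk : (Nat.factorial k : ℝ) ≠ 0 := by exact_mod_cast (Nat.factorial_pos k).ne'
      field_simp
  rw [hfactor, abs_mul, abs_of_nonneg (by positivity : (0:ℝ) ≤ c ^ y / (Nat.factorial y : ℝ))]
  calc c ^ y / (Nat.factorial y : ℝ)
        * |Real.exp (-c) - ∑ k ∈ Finset.range M, (-c) ^ k / (Nat.factorial k : ℝ)|
      ≤ c ^ y / (Nat.factorial y : ℝ) * ∑' j : ℕ, c ^ (j + M) / (Nat.factorial (j+M) : ℝ) := by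
        apply mul_le_mul_of_nonneg_left _ (by positivity)
        rw [aux_exp_tail (-c) M]
        calc |∑' j : ℕ, (-c) ^ (j + M) / (Nat.factorial (j+M) : ℝ)|
            ≤ ∑' j : ℕ, ‖(-c) ^ (j + M) / (Nat.factorial (j+M) : ℝ)‖ := by
              rw [← Real.norm_eq_abs]
              exact norm_tsum_le_tsum_norm hsum_n
        _ = ∑' j : ℕ, c ^ (j + M) / (Nat.factorial (j+M) : ℝ) := by
              apply tsum_congr; intro j; rw [Real.norm_eq_abs, habs j]
  _ = ∑' j : ℕ, c ^ y * c ^ (j + M) / ((Nat.factorial y : ℝ) * (Nat.factorial (j+M) : ℝ)) := by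
        rw [← tsum_mul_left]
        apply tsum_congr; intro j
        field_simp
  _ ≤ ∑' j : ℕ, a ^ y * a ^ (j + M) / ((Nat.factorial y : ℝ) * (Nat.factorial (j+M) : ℝ)) := by
        apply Summable.tsum_le_tsum _ (by
          apply Summable.congr (hsum_c.mul_left (c ^ y / (Nat.factorial y : ℝ)))
          intro j; field_simp)
          (by
          apply Summable.congr (hsum_a.mul_left (a ^ y / (Nat.factorial y : ℝ)))
          intro j; field_simp)
        intro j
        gcongr <;> assumption

/-- pmf at `y` of the mixed-Poisson distribution with rate scaling `n` and mixing
measure `μ`. -/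
noncomputable def mixedPoissonPMF (n : ℕ) (μ : Measure ℝ) (y : ℕ) : ℝ :=
  ∫ p, Real.exp (-((n : ℝ) * p)) * ((n : ℝ) * p) ^ y / (Nat.factorial y : ℝ) ∂μ

theorem mixedPoisson_TV_bound :
    ∃ N₀ : ℕ, ∀ n : ℕ, N₀ ≤ n →
      ∀ μ₀ μ₁ : Measure ℝ,
        IsProbabilityMeasure μ₀ → IsProbabilityMeasure μ₁ →
        μ₀ ((Set.Icc (0 : ℝ) (Real.log n / n))ᶜ) = 0 →
        μ₁ ((Set.Icc (0 : ℝ) (Real.log n / n))ᶜ) = 0 →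
        (∀ l : ℕ, (l : ℝ) ≤ 10 * Real.exp 1 * Real.log n →
          (∫ p, p ^ l ∂μ₁) = ∫ p, p ^ l ∂μ₀) →
        (1 / 2 : ℝ≥0∞) *
            ∑' y : ℕ, ENNReal.ofReal |mixedPoissonPMF n μ₁ y - mixedPoissonPMF n μ₀ y|
          ≤ ENNReal.ofReal (((n : ℝ) ^ 6)⁻¹) := by
  refine ⟨100, fun n hn μ₀ μ₁ hP₀ hP₁ h₀ h₁ hmom => ?_⟩
  have hn100 : (100 : ℝ) ≤ (n : ℝ) := by exact_mod_cast hn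
  have hn0 : (0 : ℝ) < (n : ℝ) := by linarith
  set a := Real.log n with ha_def
  have hE2 : (2:ℝ) ≤ Real.exp 1 := by nlinarith [Real.exp_one_gt_d9]
  have hE3 : Real.exp 1 ≤ 3 := by nlinarith [Real.exp_one_lt_d9]
  have ha1 : (1:ℝ) ≤ a := by
    rw [ha_def, Real.le_log_iff_exp_le hn0]; linarith
  have ha0 : (0:ℝ) < a := by linarith
  set L := Nat.floor (10 * Real.exp 1 * a) with hL_def
  have hL_le : (L:ℝ) ≤ 10 * Real.exp 1 * a := Nat.floor_le (by positivity)
  have hL_lt : 10 * Real.exp 1 * a < (L:ℝ) + 1 := Nat.lt_floor_add_one _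
  set S := Set.Icc (0:ℝ) (a / n) with hS_def
  have hae : ∀ (μ : Measure ℝ), μ Sᶜ = 0 → ∀ᵐ p ∂μ, p ∈ S := by
    intro μ hμ
    rw [MeasureTheory.ae_iff]
    exact hμ
  have hc : ∀ p ∈ S, 0 ≤ (n:ℝ) * p ∧ (n:ℝ) * p ≤ a := by
    intro p hp
    obtain ⟨hp0, hpa⟩ := hp
    constructor
    · positivity
    · calc (n:ℝ) * p ≤ (n:ℝ) * (a / n) := by gcongr
      _ = a := by field_simp
  set f : ℕ → ℝ → ℝ :=
    fun y p => Real.exp (-((n : ℝ) * p)) * ((n : ℝ) * p) ^ y / (Nat.factorial y : ℝ) with hf_def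
  set g : ℕ → ℝ → ℝ := fun y p => ∑ k ∈ Finset.range (L + 1 - y),
    ((-1:ℝ)^k * (n:ℝ)^(y+k) / ((Nat.factorial y : ℝ) * (Nat.factorial k : ℝ))) * p^(y+k)
    with hg_def
  set w : ℕ → ℝ := fun y => ∑' j : ℕ, a ^ y * a ^ (j + (L + 1 - y))
      / ((Nat.factorial y : ℝ) * (Nat.factorial (j + (L + 1 - y)) : ℝ)) with hw_def
  have hg_eq : ∀ (y : ℕ) (p : ℝ), g y p = ∑ k ∈ Finset.range (L + 1 - y),
      (-((n:ℝ)*p))^k * ((n:ℝ)*p)^y / ((Nat.factorial y : ℝ) * (Nat.factorial k : ℝ)) := by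
    intro y p
    apply Finset.sum_congr rfl
    intro k _
    have hneg : (-((n:ℝ)*p))^k = (-1:ℝ)^k * ((n:ℝ)*p)^k := by rw [neg_pow]
    rw [hneg, mul_pow, mul_pow, pow_add]
    ring
  have hpoint : ∀ (y : ℕ), ∀ p ∈ S, |f y p - g y p| ≤ w y := by
    intro y p hp
    obtain ⟨h1, h2⟩ := hc p hp
    rw [hg_eq]
    exact aux_pointwise h1 h2 y (L + 1 - y)
  -- bound on w
  have hyM : ∀ y : ℕ, L + 1 ≤ y + (L + 1 - y) := fun y => tsub_le_iff_left.mp le_rfl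
  have hw_bound : ∀ y : ℕ, w y ≤ 2 * (1/5:ℝ) ^ (y + (L + 1 - y)) := by
    intro y
    set M := L + 1 - y with hM_def
    have hsum_a : Summable (fun j : ℕ => a ^ (j + M) / (Nat.factorial (j+M) : ℝ)) :=
      (_root_.summable_nat_add_iff M).mpr (Real.summable_pow_div_factorial a)
    have hsumL : Summable (fun j : ℕ => a ^ y * a ^ (j + M)
        / ((Nat.factorial y : ℝ) * (Nat.factorial (j + M) : ℝ))) := by
      apply Summable.congr (hsum_a.mul_left (a ^ y / (Nat.factorial y : ℝ)))
      intro j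
      field_simp
    have hterm : ∀ j : ℕ, a ^ y * a ^ (j + M)
        / ((Nat.factorial y : ℝ) * (Nat.factorial (j + M) : ℝ))
        ≤ (1/5:ℝ) ^ (y + M) * (1/5:ℝ) ^ j := by
      intro j
      have h10 : 10 * Real.exp 1 * a ≤ ((y + (j + M) : ℕ) : ℝ) := by
        have h1 : L + 1 ≤ y + (j + M) := le_trans (hyM y) (by omega)
        have h2 : ((L:ℝ)) + 1 ≤ ((y + (j + M) : ℕ) : ℝ) := by exact_mod_cast h1
        linarith
      have := aux_term_bound ha0 y (j + M) h10
      have hl : a ^ y * a ^ (j + M) = a ^ (y + (j + M)) := by rw [← pow_add]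
      have hr : (1/5:ℝ) ^ (y + (j + M)) = (1/5:ℝ) ^ (y + M) * (1/5:ℝ) ^ j := by
        rw [← pow_add]; congr 1; omega
      rw [hl, ← hr]
      exact this
    calc w y ≤ ∑' j : ℕ, (1/5:ℝ) ^ (y + M) * (1/5:ℝ) ^ j := by
          exact Summable.tsum_le_tsum hterm hsumL
            (((summable_geometric_of_lt_one (by norm_num) (by norm_num))).mul_left _)
    _ = (1/5:ℝ) ^ (y + M) * (1 - 1/5)⁻¹ := by
          rw [tsum_mul_left, tsum_geometric_of_lt_one (by norm_num) (by norm_num)]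
    _ ≤ 2 * (1/5:ℝ) ^ (y + M) := by
          have : (0:ℝ) ≤ (1/5:ℝ) ^ (y + M) := by positivity
          nlinarith
  -- integrability
  have hmono : ∀ (μ : Measure ℝ), IsProbabilityMeasure μ → μ Sᶜ = 0 →
      ∀ l : ℕ, Integrable (fun p => p ^ l) μ := by
    intro μ hprob hμc l
    haveI := hprob
    refine ⟨(continuous_pow l).aestronglyMeasurable, ?_⟩
    apply HasFiniteIntegral.of_bounded (C := (a / n) ^ l)
    filter_upwards [hae μ hμc] with p hp
    rw [Real.norm_eq_abs, abs_of_nonneg (pow_nonneg hp.1 l)]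
    exact pow_le_pow_left₀ hp.1 hp.2 l
  have hint_f : ∀ (μ : Measure ℝ), IsProbabilityMeasure μ → μ Sᶜ = 0 →
      ∀ y : ℕ, Integrable (f y) μ := by
    intro μ hprob hμc y
    haveI := hprob
    refine ⟨?_, ?_⟩
    · apply Continuous.aestronglyMeasurable
      apply Continuous.div_const
      exact ((Real.continuous_exp.comp (continuous_const.mul continuous_id).neg).mul
        ((continuous_const.mul continuous_id).pow y))
    · apply HasFiniteIntegral.of_bounded (C := a ^ y / (Nat.factorial y : ℝ))
      filter_upwards [hae μ hμc] with p hp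
      obtain ⟨h1, h2⟩ := hc p hp
      have hfy : (0:ℝ) < (Nat.factorial y : ℝ) := by exact_mod_cast Nat.factorial_pos y
      rw [Real.norm_eq_abs, hf_def]
      rw [abs_of_nonneg (by positivity)]
      have hexp : Real.exp (-((n:ℝ)*p)) ≤ 1 := Real.exp_le_one_iff.mpr (by linarith)
      have hpow : ((n:ℝ)*p) ^ y ≤ a ^ y := pow_le_pow_left₀ h1 h2 y
      have h3 : Real.exp (-((n:ℝ)*p)) * ((n:ℝ)*p) ^ y ≤ a ^ y := by
        nlinarith [Real.exp_pos (-((n:ℝ)*p)), pow_nonneg h1 y]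
      rw [div_le_div_iff₀ hfy hfy]
      nlinarith [h3, hfy]
  have hint_g : ∀ (μ : Measure ℝ), IsProbabilityMeasure μ → μ Sᶜ = 0 →
      ∀ y : ℕ, Integrable (g y) μ := by
    intro μ hprob hμc y
    haveI := hprob
    apply integrable_finset_sum
    intro k _
    exact (hmono μ hprob hμc (y + k)).const_mul _
  -- equal integrals of g
  have hg_int_eq : ∀ y : ℕ, ∫ p, g y p ∂μ₁ = ∫ p, g y p ∂μ₀ := by
    intro y
    rw [hg_def]
    rw [integral_finset_sum _ (fun k _ => ((hmono μ₁ hP₁ h₁ (y + k)).const_mul _)),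
      integral_finset_sum _ (fun k _ => ((hmono μ₀ hP₀ h₀ (y + k)).const_mul _))]
    apply Finset.sum_congr rfl
    intro k hk
    rw [integral_const_mul, integral_const_mul]
    congr 1
    apply hmom
    have hkL : y + k ≤ L := by
      have := Finset.mem_range.mp hk
      omega
    calc ((y + k : ℕ) : ℝ) ≤ (L : ℝ) := by exact_mod_cast hkL
    _ ≤ 10 * Real.exp 1 * a := hL_le
  -- per-y bound
  have hΔ : ∀ y : ℕ, |mixedPoissonPMF n μ₁ y - mixedPoissonPMF n μ₀ y| ≤ 2 * w y := by
    intro y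
    have hm₁ : mixedPoissonPMF n μ₁ y = ∫ p, f y p ∂μ₁ := rfl
    have hm₀ : mixedPoissonPMF n μ₀ y = ∫ p, f y p ∂μ₀ := rfl
    have hdiff : ∀ (μ : Measure ℝ), IsProbabilityMeasure μ → μ Sᶜ = 0 →
        |∫ p, (f y p - g y p) ∂μ| ≤ w y := by
      intro μ hprob hμc
      haveI := hprob
      have := norm_integral_le_of_norm_le_const (μ := μ)
        (f := fun p => f y p - g y p) (C := w y) ?_
      · rw [Real.norm_eq_abs] at this
        simpa using this
      · filter_upwards [hae μ hμc] with p hp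
        rw [Real.norm_eq_abs]
        exact hpoint y p hp
    have hsub₁ : ∫ p, (f y p - g y p) ∂μ₁ = (∫ p, f y p ∂μ₁) - ∫ p, g y p ∂μ₁ :=
      integral_sub (hint_f μ₁ hP₁ h₁ y) (hint_g μ₁ hP₁ h₁ y)
    have hsub₀ : ∫ p, (f y p - g y p) ∂μ₀ = (∫ p, f y p ∂μ₀) - ∫ p, g y p ∂μ₀ :=
      integral_sub (hint_f μ₀ hP₀ h₀ y) (hint_g μ₀ hP₀ h₀ y)
    have key : mixedPoissonPMF n μ₁ y - mixedPoissonPMF n μ₀ y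
        = (∫ p, (f y p - g y p) ∂μ₁) - ∫ p, (f y p - g y p) ∂μ₀ := by
      rw [hsub₁, hsub₀, hm₁, hm₀, hg_int_eq y]
      ring
    rw [key]
    calc |(∫ p, (f y p - g y p) ∂μ₁) - ∫ p, (f y p - g y p) ∂μ₀|
        ≤ |∫ p, (f y p - g y p) ∂μ₁| + |∫ p, (f y p - g y p) ∂μ₀| := abs_sub _ _
    _ ≤ w y + w y := add_le_add (hdiff μ₁ hP₁ h₁) (hdiff μ₀ hP₀ h₀)
    _ = 2 * w y := by ring
  -- final summation
  set W : ℕ → ℝ := fun y => 4 * (1/5:ℝ) ^ (y + (L + 1 - y)) with hW_def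
  have hΔW : ∀ y : ℕ, |mixedPoissonPMF n μ₁ y - mixedPoissonPMF n μ₀ y| ≤ W y := by
    intro y
    calc |mixedPoissonPMF n μ₁ y - mixedPoissonPMF n μ₀ y| ≤ 2 * w y := hΔ y
    _ ≤ 2 * (2 * (1/5:ℝ) ^ (y + (L + 1 - y))) := by linarith [hw_bound y]
    _ = W y := by rw [hW_def]; ring
  have hWnonneg : ∀ y, 0 ≤ W y := fun y => by positivity
  have hWsum : Summable W := by
    apply Summable.of_nonneg_of_le hWnonneg (fun y => ?_)
      ((summable_geometric_of_lt_one (by norm_num : (0:ℝ) ≤ 1/5) (by norm_num)).mul_left 4)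
    rw [hW_def]
    have : (1/5:ℝ) ^ (y + (L + 1 - y)) ≤ (1/5:ℝ) ^ y :=
      pow_le_pow_of_le_one (by norm_num) (by norm_num) (Nat.le_add_right y _)
    nlinarith
  have htsumW : ∑' y : ℕ, W y ≤ (4 * (L:ℝ) + 9) * (1/5:ℝ) ^ (L + 1) := by
    rw [← Summable.sum_add_tsum_nat_add (L + 1) hWsum]
    have hfirst : ∑ y ∈ Finset.range (L + 1), W y = ((L:ℝ) + 1) * (4 * (1/5:ℝ) ^ (L + 1)) := by
      have heach : ∀ y ∈ Finset.range (L + 1), W y = 4 * (1/5:ℝ) ^ (L + 1) := by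
        intro y hy
        have hy' := Finset.mem_range.mp hy
        have hidx : y + (L + 1 - y) = L + 1 := by omega
        simp only [hW_def, hidx]
      rw [Finset.sum_congr rfl heach, Finset.sum_const, Finset.card_range, nsmul_eq_mul]
      push_cast
      ring
    have hsecond : ∑' j : ℕ, W (j + (L + 1)) = 5 * (1/5:ℝ) ^ (L + 1) := by
      have heach : ∀ j : ℕ, W (j + (L + 1)) = (4 * (1/5:ℝ) ^ (L + 1)) * (1/5:ℝ) ^ j := by
        intro j
        have hidx : (j + (L + 1)) + (L + 1 - (j + (L + 1))) = (L + 1) + j := by omega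
        simp only [hW_def]
        rw [hidx, pow_add]
        ring
      rw [tsum_congr heach, tsum_mul_left,
        tsum_geometric_of_lt_one (by norm_num) (by norm_num)]
      norm_num
      ring
    rw [hfirst, hsecond]
    have : (0:ℝ) ≤ (1/5:ℝ) ^ (L + 1) := by positivity
    nlinarith
  have hnum : (4 * (L:ℝ) + 9) * (1/5:ℝ) ^ (L + 1) ≤ 2 * (((n:ℝ) ^ 6)⁻¹) := by
    have hq1 : (1/5:ℝ) ≤ Real.exp (-1) := by
      rw [Real.exp_neg]
      have h1 : (1:ℝ)/3 ≤ (Real.exp 1)⁻¹ := by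
        rw [inv_eq_one_div]
        apply one_div_le_one_div_of_le (by positivity) hE3
      linarith
    have hq2 : (1/5:ℝ) ^ (L + 1) ≤ Real.exp (-(((L:ℝ) + 1))) := by
      calc (1/5:ℝ) ^ (L + 1) ≤ (Real.exp (-1)) ^ (L + 1) :=
        pow_le_pow_left₀ (by norm_num) hq1 (L + 1)
      _ = Real.exp (-(((L:ℝ) + 1))) := by
          rw [← Real.exp_nat_mul]
          congr 1
          push_cast
          ring
    have hq3 : Real.exp (-(((L:ℝ) + 1))) ≤ Real.exp (-(20 * a)) := by
      apply Real.exp_le_exp.mpr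
      nlinarith
    have hq4 : Real.exp (-(20 * a)) = (((n:ℝ) ^ 20)⁻¹) := by
      rw [Real.exp_neg]
      congr 1
      rw [show (20:ℝ) * a = ((20:ℕ):ℝ) * a by norm_num, Real.exp_nat_mul,
        ha_def, Real.exp_log hn0]
    have hq : (1/5:ℝ) ^ (L + 1) ≤ ((n:ℝ) ^ 20)⁻¹ := by
      rw [← hq4]
      exact le_trans hq2 hq3
    have hcoef : 4 * (L:ℝ) + 9 ≤ 129 * (n:ℝ) := by
      have hlog : a ≤ (n:ℝ) := by
        rw [ha_def]
        linarith [Real.log_le_sub_one_of_pos hn0]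
      nlinarith
    have h13 : (100:ℝ) ≤ (n:ℝ) ^ 13 :=
      le_trans hn100 (le_self_pow₀ (by linarith) (by norm_num))
    have hsplit : (n:ℝ) ^ 20 = (n:ℝ) ^ 13 * (n:ℝ) ^ 7 := by ring
    have hfin : 129 * (n:ℝ) * ((n:ℝ) ^ 20)⁻¹ ≤ 2 * (((n:ℝ) ^ 6)⁻¹) := by
      rw [div_eq_mul_inv] at *
      have h20 : (0:ℝ) < (n:ℝ) ^ 20 := by positivity
      have h6 : (0:ℝ) < (n:ℝ) ^ 6 := by positivity
      rw [mul_inv_le_iff₀ h20, mul_comm (2 * ((n:ℝ) ^ 6)⁻¹) ((n:ℝ)^20)]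
      have : (2:ℝ) * ((n:ℝ) ^ 6)⁻¹ * (n:ℝ)^20 = 2 * (n:ℝ)^14 := by
        field_simp
      rw [mul_comm ((n:ℝ)^20) (2 * ((n:ℝ) ^ 6)⁻¹), this]
      have h14 : (n:ℝ)^14 = (n:ℝ)^13 * (n:ℝ) := by ring
      nlinarith [h13, hn0]
    calc (4 * (L:ℝ) + 9) * (1/5:ℝ) ^ (L + 1)
        ≤ (129 * (n:ℝ)) * (((n:ℝ) ^ 20)⁻¹) := by
          apply mul_le_mul hcoef hq (by positivity) (by positivity)
    _ ≤ 2 * (((n:ℝ) ^ 6)⁻¹) := hfin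
  -- ENNReal wrap-up
  have hW_total : ∑' y : ℕ, W y ≤ 2 * (((n:ℝ) ^ 6)⁻¹) := le_trans htsumW hnum
  calc (1 / 2 : ℝ≥0∞) *
        ∑' y : ℕ, ENNReal.ofReal |mixedPoissonPMF n μ₁ y - mixedPoissonPMF n μ₀ y|
      ≤ (1 / 2 : ℝ≥0∞) * ∑' y : ℕ, ENNReal.ofReal (W y) := by
        gcongr with y
        exact hΔW y
  _ = (1 / 2 : ℝ≥0∞) * ENNReal.ofReal (∑' y : ℕ, W y) := by
        rw [ENNReal.ofReal_tsum_of_nonneg hWnonneg hWsum]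
  _ ≤ (1 / 2 : ℝ≥0∞) * ENNReal.ofReal (2 * (((n:ℝ) ^ 6)⁻¹)) := by
        gcongr
  _ = ENNReal.ofReal (((n:ℝ) ^ 6)⁻¹) := by
        rw [ENNReal.ofReal_mul (by norm_num : (0:ℝ) ≤ 2)]
        rw [ENNReal.ofReal_ofNat, ← mul_assoc, one_div,
          ENNReal.inv_mul_cancel (by norm_num) (by norm_num), one_mul]
end

section
/- Let λ > 0, let k ≥ 1 be an integer, and let X ~ Poisson(λ). Then, with M = max{λ, k}, the k-th moment of X satisfies E[X^k] ≤ (2M)^k. -/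
open scoped ENNReal

open Finset in
lemma nat_pow_le_sum_desc (j k : ℕ) :
    j ^ k ≤ ∑ i ∈ range (k + 1), k.choose i * k ^ (k - i) * j.descFactorial i := by
  rcases le_or_gt j k with h | h
  · calc j ^ k ≤ k ^ k := Nat.pow_le_pow_left h k
    _ = k.choose 0 * k ^ (k - 0) * j.descFactorial 0 := by simp
    _ ≤ _ := Finset.single_le_sum (f := fun i => k.choose i * k ^ (k - i) * j.descFactorial i)
        (fun i _ => Nat.zero_le _) (Finset.mem_range.2 (Nat.succ_pos k))
  · have hjk : k ≤ j := h.le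
    have : j ^ k = ((j - k) + k) ^ k := by rw [Nat.sub_add_cancel hjk]
    rw [this, add_pow]
    apply Finset.sum_le_sum
    intro i hi
    have hik : i ≤ k := Nat.lt_succ_iff.1 (Finset.mem_range.1 hi)
    have h1 : (j - k) ^ i ≤ j.descFactorial i := by
      calc (j - k) ^ i ≤ (j + 1 - i) ^ i :=
            Nat.pow_le_pow_left (by omega) i
        _ ≤ j.descFactorial i := Nat.pow_sub_le_descFactorial j i
    calc (j - k) ^ i * k ^ (k - i) * k.choose i
        ≤ j.descFactorial i * k ^ (k - i) * k.choose i := by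
          exact Nat.mul_le_mul_right _ (Nat.mul_le_mul_right _ h1)
      _ = k.choose i * k ^ (k - i) * j.descFactorial i := by ring

lemma tsum_desc_poisson (lam : ℝ) (hlam : 0 < lam) (i : ℕ) :
    ∑' j : ℕ, ENNReal.ofReal
        ((Nat.descFactorial j i : ℝ) * (Real.exp (-lam) * lam ^ j / (Nat.factorial j : ℝ)))
      = ENNReal.ofReal (lam ^ i) := by
  set f : ℕ → ℝ≥0∞ := fun j => ENNReal.ofReal
      ((Nat.descFactorial j i : ℝ) * (Real.exp (-lam) * lam ^ j / (Nat.factorial j : ℝ))) with hf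
  have hinj : Function.Injective (fun m : ℕ => m + i) := fun a b h => by simpa using h
  have hsupp : Function.support f ⊆ Set.range (fun m : ℕ => m + i) := by
    intro j hj
    rcases le_or_gt i j with h | h
    · exact ⟨j - i, by simp [Nat.sub_add_cancel h]⟩
    · exfalso
      apply hj
      have : Nat.descFactorial j i = 0 := Nat.descFactorial_eq_zero_iff_lt.2 h
      simp [hf, this]
  have hshift : ∀ j : ℕ, f (j + i) =
      ENNReal.ofReal (Real.exp (-lam) * lam ^ i * (lam ^ j / (Nat.factorial j : ℝ))) := by
    intro j
    have hfac : (Nat.factorial j : ℝ) * (Nat.descFactorial (j + i) i : ℝ)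
        = (Nat.factorial (j + i) : ℝ) := by
      rw [← Nat.cast_mul]
      norm_cast
      have := Nat.factorial_mul_descFactorial (n := j + i) (k := i) (Nat.le_add_left i j)
      simpa using this
    have hjfac : (Nat.factorial j : ℝ) ≠ 0 := by positivity
    have hjifac : (Nat.factorial (j + i) : ℝ) ≠ 0 := by positivity
    have hdesc : (Nat.descFactorial (j + i) i : ℝ)
        = (Nat.factorial (j + i) : ℝ) / (Nat.factorial j : ℝ) := by
      field_simp
      linarith [hfac]
    simp only [hf]
    congr 1
    rw [hdesc, pow_add]
    field_simp
  rw [← hinj.tsum_eq hsupp]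
  have : ∑' j : ℕ, f (j + i)
      = ENNReal.ofReal (∑' j : ℕ, Real.exp (-lam) * lam ^ i * (lam ^ j / (Nat.factorial j : ℝ))) := by
    rw [ENNReal.ofReal_tsum_of_nonneg]
    · exact tsum_congr hshift
    · intro n; positivity
    · exact ((NormedSpace.expSeries_div_summable lam).mul_left _)
  have hexp : ∑' x : ℕ, lam ^ x / (Nat.factorial x : ℝ) = Real.exp lam := by
    rw [Real.exp_eq_exp_ℝ, NormedSpace.exp_eq_tsum_div]
  rw [show (∑' (c : ℕ), f ((fun m => m + i) c)) = ∑' j : ℕ, f (j + i) from rfl, this,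
    tsum_mul_left, hexp]
  rw [show Real.exp (-lam) * lam ^ i * Real.exp lam
      = lam ^ i * (Real.exp (-lam) * Real.exp lam) by ring, ← Real.exp_add]
  simp

theorem poisson_moment_bound (lam : ℝ) (hlam : 0 < lam) (k : ℕ) (hk : 1 ≤ k) :
    ∑' j : ℕ, ENNReal.ofReal
        ((j : ℝ) ^ k * (Real.exp (-lam) * lam ^ j / (Nat.factorial j : ℝ)))
      ≤ ENNReal.ofReal ((2 * max lam (k : ℝ)) ^ k) := by
  set M : ℝ := max lam (k : ℝ) with hM
  have hMpos : 0 < M := lt_of_lt_of_le hlam (le_max_left _ _)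
  -- termwise bound
  have step1 : ∀ j : ℕ, ENNReal.ofReal
      ((j : ℝ) ^ k * (Real.exp (-lam) * lam ^ j / (Nat.factorial j : ℝ)))
      ≤ ∑ i ∈ Finset.range (k + 1), ENNReal.ofReal
        ((k.choose i * k ^ (k - i) : ℝ) *
          ((Nat.descFactorial j i : ℝ) * (Real.exp (-lam) * lam ^ j / (Nat.factorial j : ℝ)))) := by
    intro j
    have hnn : 0 ≤ Real.exp (-lam) * lam ^ j / (Nat.factorial j : ℝ) := by positivity
    rw [← ENNReal.ofReal_sum_of_nonneg (fun i _ => by positivity)]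
    apply ENNReal.ofReal_le_ofReal
    have hnat := nat_pow_le_sum_desc j k
    have : ((j : ℝ) ^ k) ≤ ∑ i ∈ Finset.range (k + 1),
        (k.choose i * k ^ (k - i) : ℝ) * (Nat.descFactorial j i : ℝ) := by
      have := Nat.cast_le (α := ℝ) |>.2 hnat
      push_cast at this
      convert this using 2 with i
    calc (j : ℝ) ^ k * (Real.exp (-lam) * lam ^ j / (Nat.factorial j : ℝ))
        ≤ (∑ i ∈ Finset.range (k + 1),
            (k.choose i * k ^ (k - i) : ℝ) * (Nat.descFactorial j i : ℝ)) *
          (Real.exp (-lam) * lam ^ j / (Nat.factorial j : ℝ)) :=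
          mul_le_mul_of_nonneg_right this hnn
      _ = _ := by rw [Finset.sum_mul]; exact Finset.sum_congr rfl (fun i _ => by ring)
  calc ∑' j : ℕ, ENNReal.ofReal
        ((j : ℝ) ^ k * (Real.exp (-lam) * lam ^ j / (Nat.factorial j : ℝ)))
      ≤ ∑' j : ℕ, ∑ i ∈ Finset.range (k + 1), ENNReal.ofReal
        ((k.choose i * k ^ (k - i) : ℝ) *
          ((Nat.descFactorial j i : ℝ) * (Real.exp (-lam) * lam ^ j / (Nat.factorial j : ℝ)))) :=
        ENNReal.tsum_le_tsum step1
    _ = ∑ i ∈ Finset.range (k + 1), ∑' j : ℕ, ENNReal.ofReal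
        ((k.choose i * k ^ (k - i) : ℝ) *
          ((Nat.descFactorial j i : ℝ) * (Real.exp (-lam) * lam ^ j / (Nat.factorial j : ℝ)))) := by
        exact Summable.tsum_finsetSum fun i _ => ENNReal.summable
    _ = ∑ i ∈ Finset.range (k + 1),
        ENNReal.ofReal ((k.choose i * k ^ (k - i) : ℝ) * lam ^ i) := by
        refine Finset.sum_congr rfl fun i _ => ?_
        have hC : (0:ℝ) ≤ (k.choose i * k ^ (k - i) : ℝ) := by positivity
        simp_rw [ENNReal.ofReal_mul hC]
        rw [ENNReal.tsum_mul_left, tsum_desc_poisson lam hlam i, ← ENNReal.ofReal_mul hC]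
    _ ≤ ENNReal.ofReal ((2 * M) ^ k) := by
        rw [← ENNReal.ofReal_sum_of_nonneg (fun i _ => by positivity)]
        apply ENNReal.ofReal_le_ofReal
        have h2M : 2 * M = M + M := by ring
        rw [h2M, add_pow]
        apply Finset.sum_le_sum
        intro i hi
        have hlamM : lam ≤ M := le_max_left _ _
        have hkM : (k : ℝ) ≤ M := le_max_right _ _
        calc (k.choose i * k ^ (k - i) : ℝ) * lam ^ i
            = lam ^ i * (k:ℝ) ^ (k - i) * (k.choose i : ℝ) := by ring
          _ ≤ M ^ i * M ^ (k - i) * (k.choose i : ℝ) := by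
              gcongr
end
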